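/- arXiv:1510.02243 — 2 statements merged into one kernel-verified Lean document; each statement's English description precedes it below -/
import Mathlib

section
/- Let m_ε = (ε/r_ε) 1_{B_ε} L³⌊Ω be the rescaled measure supported on a family B_ε of disjoint layers Ω'×(ω_ε^j + r_ε I) of thickness r_ε whose centers are ε-separated in (0,L). If n_ε ⇀* n weakly* in L^∞(Ω) (with n_ε the layer-counting function), then m_ε ⇀* n L³⌊Ω weakly* in M(Ω̄). -/
open MeasureTheory Set Filter Topology Bornology Classical

noncomputable section

/-- Projection of a point of `ℝ³` onto its first two coordinates. -/
def proj2 (x : Fin 3 → ℝ) : Fin 2 → ℝ := fun i => x i.castSucc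

/-- Euclidean dot product on `ℝ³`. -/
def dot3 (u v : Fin 3 → ℝ) : ℝ := ∑ i, u i * v i

/-- Squared Euclidean norm on `ℝ³`. -/
def nsq3 (u : Fin 3 → ℝ) : ℝ := ∑ i, (u i) ^ 2

/-- Entries of the symmetrized gradient `e(u) = (∇u + ∇uᵀ)/2` of a vector field on `ℝ³`. -/
def symGrad (u : (Fin 3 → ℝ) → Fin 3 → ℝ) (x : Fin 3 → ℝ) (i j : Fin 3) : ℝ :=
  (fderiv ℝ u x (Pi.single j 1) i + fderiv ℝ u x (Pi.single i 1) j) / 2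

/-- Squared Frobenius norm of the symmetrized gradient. -/
def symGradSq (u : (Fin 3 → ℝ) → Fin 3 → ℝ) (x : Fin 3 → ℝ) : ℝ :=
  ∑ i, ∑ j, (symGrad u x i j) ^ 2

/-- The cylinder `Ω = Ω' × (0,L) ⊂ ℝ³`. -/
def OmegaSet (Ω' : Set (Fin 2 → ℝ)) (L : ℝ) : Set (Fin 3 → ℝ) :=
  {x | proj2 x ∈ Ω' ∧ x 2 ∈ Set.Ioo 0 L}

/-- The union of layers `B_ε = ⋃_j Ω' × (ω_ε^j + r_ε I)`, `I = (-1/2,1/2)`. -/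
def layerSet (Ω' : Set (Fin 2 → ℝ)) (ω : Finset ℝ) (r : ℝ) : Set (Fin 3 → ℝ) :=
  {x | proj2 x ∈ Ω' ∧ ∃ c ∈ ω, |x 2 - c| < r / 2}

/-- The rescaled layer measure `m_ε = (ε/r_ε) 1_{B_ε} ℒ³⌊Ω`. -/
def layerMeasure (Ω' : Set (Fin 2 → ℝ)) (ω : Finset ℝ) (ε r : ℝ) :
    Measure (Fin 3 → ℝ) :=
  (ENNReal.ofReal (ε / r)) • volume.restrict (layerSet Ω' ω r)

/-- Geometric hypotheses on the layers: `ω_ε ⊂ (0,L)`, minimal interpoint distance `ε`,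
distance `> ε/2` to `{0,L}`, and `r_ε (1+δ) < ε`. -/
def GoodLayers (L ε r δ : ℝ) (ω : Finset ℝ) : Prop :=
  0 < L ∧ 0 < ε ∧ 0 < r ∧ 0 < δ ∧ r * (1 + δ) < ε ∧
  (∀ a ∈ ω, a ∈ Set.Ioo 0 L) ∧
  (∀ a ∈ ω, ∀ b ∈ ω, a ≠ b → ε ≤ |a - b|) ∧
  (∀ a ∈ ω, ε / 2 < a ∧ a < L - ε / 2)

/-- The rescaled layer-counting function `n_ε`. -/
def countFn (L ε : ℝ) (ω : Finset ℝ) (x3 : ℝ) : ℝ :=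
  ∑' i : ℤ,
    if Set.Ioc (ε * i - ε / 2) (ε * i + ε / 2) ⊆ Set.Ioo 0 L then
      ((ω.filter (fun a => ε * i - ε / 2 < a ∧ a ≤ ε * i + ε / 2)).card : ℝ)
        * Set.indicator (Set.Ioo (ε * i - ε / 2) (ε * i + ε / 2)) (fun _ => (1 : ℝ)) x3
    else 0

/-- Weak-* convergence in `L^∞(Ω)` of the counting functions `n_ε` to `n`. -/
def NConv (Ω' : Set (Fin 2 → ℝ)) (L : ℝ) (ε : ℕ → ℝ) (ω : ℕ → Finset ℝ)
    (n : (Fin 3 → ℝ) → ℝ) : Prop :=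
  ∀ g : (Fin 3 → ℝ) → ℝ, Integrable g (volume.restrict (OmegaSet Ω' L)) →
    Tendsto (fun k => ∫ x in OmegaSet Ω' L, countFn L (ε k) (ω k) (x 2) * g x)
      atTop (𝓝 (∫ x in OmegaSet Ω' L, n x * g x))

/-- The local vertical coordinate `y_ε` inside the (dilated) layers. -/
def yFn (r δ : ℝ) (ω : Finset ℝ) (z : ℝ) : ℝ :=
  ∑ c ∈ ω, (z - c) *
    Set.indicator (Set.Ioo (c - r * (1 + δ) / 2) (c + r * (1 + δ) / 2))
      (fun _ => (1 : ℝ)) z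


/-! ### Auxiliary lemmas -/

section Aux

lemma phi_cont {φ : (Fin 3 → ℝ) → ℝ} (hφ : Continuous φ) :
    Continuous (fun p : ℝ × (Fin 2 → ℝ) => φ (Fin.snoc p.2 p.1)) := by
  have h1 : Continuous (fun p : ℝ × (Fin 2 → ℝ) =>
      Fin.insertNth (α := fun _ : Fin 3 => ℝ) (Fin.last 2) p.1 p.2) :=
    Continuous.finInsertNth (A := fun _ : Fin 3 => ℝ) (Fin.last 2) continuous_fst continuous_snd
  simp only [Fin.insertNth_last'] at h1
  exact hφ.comp h1

lemma slice_integrable {φ : (Fin 3 → ℝ) → ℝ} (hφ : Continuous φ)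
    {Ω' : Set (Fin 2 → ℝ)} (hb : IsBounded Ω')
    {J : Set ℝ} (hJb : IsBounded J) :
    IntegrableOn (fun p : ℝ × (Fin 2 → ℝ) => φ (Fin.snoc p.2 p.1)) (J ×ˢ Ω') volume := by
  have hK : IsCompact ((closure J) ×ˢ (closure Ω')) :=
    hJb.isCompact_closure.prod hb.isCompact_closure
  exact ((phi_cont hφ).continuousOn.integrableOn_compact hK).mono_set
    (Set.prod_mono subset_closure subset_closure)

lemma slice_eq {φ : (Fin 3 → ℝ) → ℝ} (hφ : Continuous φ)
    {Ω' : Set (Fin 2 → ℝ)} (hb : IsBounded Ω')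
    {J : Set ℝ} (hJb : IsBounded J) :
    ∫ x in {x : Fin 3 → ℝ | proj2 x ∈ Ω' ∧ x 2 ∈ J}, φ x
      = ∫ t in J, ∫ y in Ω', φ (Fin.snoc y t) := by
  set e := MeasurableEquiv.piFinSuccAbove (fun _ : Fin 3 => ℝ) 2 with he
  have hmp : MeasurePreserving e volume volume :=
    volume_preserving_piFinSuccAbove (fun _ : Fin 3 => ℝ) 2
  have hsymm : ∀ p : ℝ × (Fin 2 → ℝ), e.symm p = Fin.snoc p.2 p.1 := by
    intro p
    show (Fin.insertNthEquiv (fun _ : Fin 3 => ℝ) 2) p = _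
    simp [Fin.insertNthEquiv, show (2 : Fin 3) = Fin.last 2 from rfl, Fin.insertNth_last']
    exact Fin.insertNth_last' (n := 2) _ _
  have hset : {x : Fin 3 → ℝ | proj2 x ∈ Ω' ∧ x 2 ∈ J} = e ⁻¹' (J ×ˢ Ω') := by
    ext x
    have hrm : Fin.removeNth 2 x = proj2 x := by
      funext j
      show x ((2 : Fin 3).succAbove j) = x j.castSucc
      rw [show (2 : Fin 3) = Fin.last 2 from rfl, Fin.succAbove_last]
    constructor
    · rintro ⟨h1, h2⟩
      exact ⟨h2, by show Fin.removeNth 2 x ∈ Ω'; rw [hrm]; exact h1⟩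
    · rintro ⟨h2, h1⟩
      exact ⟨by rw [← hrm]; exact h1, h2⟩
  rw [hset]
  have key := hmp.setIntegral_preimage_emb e.measurableEmbedding
    (fun p => φ (Fin.snoc p.2 p.1)) (J ×ˢ Ω')
  have hco : ∀ x : Fin 3 → ℝ, φ (Fin.snoc (e x).2 (e x).1) = φ x := by
    intro x
    rw [← hsymm (e x), MeasurableEquiv.symm_apply_apply]
  simp only [hco] at key
  rw [key]
  have hint : Integrable (fun p : ℝ × (Fin 2 → ℝ) => φ (Fin.snoc p.2 p.1))
      ((volume.restrict J).prod (volume.restrict Ω')) := by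
    rw [Measure.prod_restrict]
    have := slice_integrable hφ hb hJb (φ := φ) (J := J)
    rwa [IntegrableOn, Measure.volume_eq_prod] at this
  calc ∫ p in J ×ˢ Ω', φ (Fin.snoc p.2 p.1)
      = ∫ p, (fun p : ℝ × (Fin 2 → ℝ) => φ (Fin.snoc p.2 p.1)) p
          ∂((volume.restrict J).prod (volume.restrict Ω')) := by
        rw [Measure.prod_restrict, ← Measure.volume_eq_prod]
    _ = ∫ t in J, ∫ y in Ω', φ (Fin.snoc y t) := integral_prod _ hint

/-- The slice integral function. -/
def Ffun (φ : (Fin 3 → ℝ) → ℝ) (Ω' : Set (Fin 2 → ℝ)) (t : ℝ) : ℝ :=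
  ∫ y in Ω', φ (Fin.snoc y t)

lemma sliceFun_cont {φ : (Fin 3 → ℝ) → ℝ} (hφ : Continuous φ) (t : ℝ) :
    Continuous (fun y : Fin 2 → ℝ => φ (Fin.snoc y t)) :=
  (phi_cont hφ).comp (Continuous.prodMk_right t)

lemma sliceFun_integrableOn {φ : (Fin 3 → ℝ) → ℝ} (hφ : Continuous φ)
    {Ω' : Set (Fin 2 → ℝ)} (hb : IsBounded Ω') (t : ℝ) :
    IntegrableOn (fun y : Fin 2 → ℝ => φ (Fin.snoc y t)) Ω' volume :=
  (((sliceFun_cont hφ t).continuousOn.integrableOn_compact hb.isCompact_closure)).mono_set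
    subset_closure

lemma F_bound {φ : (Fin 3 → ℝ) → ℝ} (hφ : Continuous φ)
    {Ω' : Set (Fin 2 → ℝ)} (hb : IsBounded Ω') {t C : ℝ}
    (hC : ∀ y ∈ Ω', ‖φ (Fin.snoc y t)‖ ≤ C) :
    ‖Ffun φ Ω' t‖ ≤ C * (volume Ω').toReal :=
  norm_setIntegral_le_of_norm_le_const hb.measure_lt_top hC

lemma F_sm {φ : (Fin 3 → ℝ) → ℝ} (hφ : Continuous φ) (Ω' : Set (Fin 2 → ℝ)) :
    StronglyMeasurable (Ffun φ Ω') :=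
  ((phi_cont hφ).stronglyMeasurable).integral_prod_right'

lemma F_integrableOn {φ : (Fin 3 → ℝ) → ℝ} (hφ : Continuous φ)
    {Ω' : Set (Fin 2 → ℝ)} (hb : IsBounded Ω')
    {J : Set ℝ} (hJm : MeasurableSet J) (hJb : IsBounded J) :
    IntegrableOn (Ffun φ Ω') J volume := by
  have hK : IsCompact ((closure J) ×ˢ (closure Ω')) :=
    hJb.isCompact_closure.prod hb.isCompact_closure
  obtain ⟨C, hC⟩ := hK.exists_bound_of_continuousOn (phi_cont hφ).continuousOn
  refine Integrable.mono' (g := fun _ => C * (volume Ω').toReal)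
    (integrableOn_const hJb.measure_lt_top.ne) ((F_sm hφ Ω').aestronglyMeasurable) ?_
  rw [ae_restrict_iff' hJm]
  refine ae_of_all _ fun t ht => ?_
  exact F_bound hφ hb fun y hy => hC (t, y) ⟨subset_closure ht, subset_closure hy⟩

end Aux

section Aux2

def cellCond (L ε : ℝ) (i : ℤ) : Prop :=
  Set.Ioc (ε * i - ε / 2) (ε * i + ε / 2) ⊆ Set.Ioo 0 L

def idxOf (ε c : ℝ) : ℤ := ⌈c / ε - 1 / 2⌉

lemma mem_cell_idx {ε : ℝ} (hε : 0 < ε) (c : ℝ) :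
    ε * idxOf ε c - ε / 2 < c ∧ c ≤ ε * idxOf ε c + ε / 2 := by
  have h1 : (c / ε - 1 / 2 : ℝ) ≤ idxOf ε c := Int.le_ceil _
  have h2 : (idxOf ε c : ℝ) < c / ε - 1 / 2 + 1 := Int.ceil_lt_add_one _
  have hce : ε * (c / ε) = c := by field_simp
  constructor <;> nlinarith

lemma idx_unique {ε : ℝ} (hε : 0 < ε) {i j : ℤ} {c : ℝ}
    (hi : ε * i - ε / 2 < c ∧ c ≤ ε * i + ε / 2)
    (hj : ε * j - ε / 2 < c ∧ c ≤ ε * j + ε / 2) : i = j := by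
  have h1 : (i : ℝ) < j + 1 := by nlinarith [hi.1, hj.2]
  have h2 : (j : ℝ) < i + 1 := by nlinarith [hj.1, hi.2]
  have h1' : i < j + 1 := by exact_mod_cast h1
  have h2' : j < i + 1 := by exact_mod_cast h2
  omega

lemma sep_inj {L ε r δ : ℝ} {ω : Finset ℝ} (hg : GoodLayers L ε r δ ω)
    {a b : ℝ} (ha : a ∈ ω) (hb : b ∈ ω) (hid : idxOf ε a = idxOf ε b) : a = b := by
  obtain ⟨hL, hε, hr, hδ, hrδ, hω, hsep, hbd⟩ := hg
  by_contra hne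
  have h1 := mem_cell_idx hε a
  have h2 := mem_cell_idx hε b
  rw [hid] at h1
  have habs : |a - b| < ε := abs_sub_lt_iff.2 ⟨by linarith [h1.1, h2.2], by linarith [h2.1, h1.2]⟩
  linarith [hsep a ha b hb hne]

lemma idx_mem {L ε r δ : ℝ} {ω : Finset ℝ} (hg : GoodLayers L ε r δ ω)
    {c : ℝ} (hc : c ∈ ω) : idxOf ε c ∈ Finset.Icc 1 ⌊L / ε⌋ := by
  obtain ⟨hL, hε, hr, hδ, hrδ, hω, hsep, hbd⟩ := hg
  have h1 := mem_cell_idx hε c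
  have hcb := hbd c hc
  rw [Finset.mem_Icc]
  constructor
  · have : (0 : ℝ) < idxOf ε c := by nlinarith [h1.2, hcb.1]
    have : (0 : ℤ) < idxOf ε c := by exact_mod_cast this
    omega
  · rw [Int.le_floor]
    have : ε * idxOf ε c < L := by linarith [h1.1, hcb.2]
    rw [le_div_iff₀ hε]
    linarith

lemma cond_iff {L ε : ℝ} (hε : 0 < ε) (i : ℤ) :
    cellCond L ε i ↔ (0 ≤ ε * i - ε / 2 ∧ ε * i + ε / 2 < L) := by
  constructor
  · intro h
    have hb : (ε * i + ε / 2 : ℝ) ∈ Set.Ioc (ε * i - ε / 2) (ε * i + ε / 2) :=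
      ⟨by linarith, le_refl _⟩
    have hbm := h hb
    refine ⟨?_, hbm.2⟩
    by_contra hneg
    push_neg at hneg
    have hmem : min ((ε * i - ε / 2) / 2) (ε * i + ε / 2)
        ∈ Set.Ioc (ε * i - ε / 2) (ε * i + ε / 2) :=
      ⟨lt_min (by linarith) (by linarith), min_le_right _ _⟩
    have := (h hmem).1
    have : min ((ε * i - ε / 2) / 2) (ε * i + ε / 2) ≤ (ε * i - ε / 2) / 2 := min_le_left _ _
    linarith [(h hmem).1]
  · rintro ⟨h1, h2⟩ t ⟨ht1, ht2⟩
    exact ⟨by linarith, by linarith⟩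

lemma bad_unique {L ε r δ : ℝ} {ω : Finset ℝ} (hg : GoodLayers L ε r δ ω)
    {a b : ℝ} (ha : a ∈ ω) (hb : b ∈ ω)
    (hba : ¬ cellCond L ε (idxOf ε a)) (hbb : ¬ cellCond L ε (idxOf ε b)) : a = b := by
  have hε := hg.2.1
  have key : ∀ c ∈ ω, ¬ cellCond L ε (idxOf ε c) →
      L - ε / 2 ≤ ε * idxOf ε c ∧ ε * idxOf ε c < L := by
    intro c hc hbad
    have h1 := mem_cell_idx hε c
    have hcb := hg.2.2.2.2.2.2.2 c hc
    have hup : ε * idxOf ε c < L := by linarith [h1.1, hcb.2]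
    have hidx1 : (1 : ℤ) ≤ idxOf ε c := (Finset.mem_Icc.1 (idx_mem hg hc)).1
    have hidx1' : (1 : ℝ) ≤ (idxOf ε c : ℝ) := by exact_mod_cast hidx1
    have hlow : 0 ≤ ε * idxOf ε c - ε / 2 := by nlinarith
    rw [cond_iff hε] at hbad
    push_neg at hbad
    exact ⟨by linarith [hbad hlow], hup⟩
  obtain ⟨l1, l2⟩ := key a ha hba
  obtain ⟨m1, m2⟩ := key b hb hbb
  have : idxOf ε a = idxOf ε b := by
    have h1 : (idxOf ε a : ℝ) < idxOf ε b + 1 := by nlinarith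
    have h2 : (idxOf ε b : ℝ) < idxOf ε a + 1 := by nlinarith
    have h1' : idxOf ε a < idxOf ε b + 1 := by exact_mod_cast h1
    have h2' : idxOf ε b < idxOf ε a + 1 := by exact_mod_cast h2
    omega
  exact sep_inj hg ha hb this

lemma card_bound {L ε r δ : ℝ} {ω : Finset ℝ} (hg : GoodLayers L ε r δ ω) :
    (ω.card : ℝ) * ε ≤ L := by
  have hL := hg.1
  have hε := hg.2.1
  have hinj : Set.InjOn (idxOf ε) ↑ω := fun a ha b hb h => sep_inj hg ha hb h
  have hcard : ω.card ≤ (Finset.Icc (1 : ℤ) ⌊L / ε⌋).card :=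
    Finset.card_le_card_of_injOn (idxOf ε) (fun c hc => idx_mem hg hc) hinj
  rw [Int.card_Icc] at hcard
  have hfl0 : (0 : ℤ) ≤ ⌊L / ε⌋ := Int.floor_nonneg.2 (by positivity)
  have h2 : ((⌊L / ε⌋ + 1 - 1).toNat : ℤ) = ⌊L / ε⌋ := by omega
  have h3 : (ω.card : ℝ) ≤ (⌊L / ε⌋ : ℝ) := by
    have h4 : (ω.card : ℤ) ≤ ((⌊L / ε⌋ + 1 - 1).toNat : ℤ) := by exact_mod_cast hcard
    have h5 : (ω.card : ℤ) ≤ ⌊L / ε⌋ := by omega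
    exact_mod_cast h5
  calc (ω.card : ℝ) * ε ≤ (L / ε) * ε := by
        nlinarith [h3, Int.floor_le (L / ε)]
    _ = L := by field_simp

lemma countFn_eq {L ε : ℝ} (hε : 0 < ε) (ω : Finset ℝ) (x3 : ℝ) :
    countFn L ε ω x3 = ∑ i ∈ Finset.Icc (1 : ℤ) ⌊L / ε⌋,
      (if cellCond L ε i then
        ((ω.filter (fun a => ε * i - ε / 2 < a ∧ a ≤ ε * i + ε / 2)).card : ℝ)
          * Set.indicator (Set.Ioo (ε * i - ε / 2) (ε * i + ε / 2)) (fun _ => (1 : ℝ)) x3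
      else 0) := by
  apply tsum_eq_sum
  intro i hi
  rw [if_neg]
  intro hcond
  apply hi
  have hc := (cond_iff hε i).1 hcond
  rw [Finset.mem_Icc]
  constructor
  · have h1 : (0 : ℝ) < (i : ℝ) := by nlinarith [hc.1]
    have : (0 : ℤ) < i := by exact_mod_cast h1
    omega
  · rw [Int.le_floor]
    rw [le_div_iff₀ hε]
    nlinarith [hc.2]

end Aux2

section Aux3

lemma proj2_measurable : Measurable proj2 :=
  measurable_pi_lambda _ (fun i => measurable_pi_apply _)

lemma omega_measurable {Ω' : Set (Fin 2 → ℝ)} (ho : IsOpen Ω') (L : ℝ) :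
    MeasurableSet (OmegaSet Ω' L) := by
  have : OmegaSet Ω' L = proj2 ⁻¹' Ω' ∩ (fun x : Fin 3 → ℝ => x 2) ⁻¹' Set.Ioo 0 L := rfl
  rw [this]
  exact (proj2_measurable ho.measurableSet).inter
    ((measurable_pi_apply 2) measurableSet_Ioo)

lemma omega_bounded {Ω' : Set (Fin 2 → ℝ)} (hb : IsBounded Ω') (L : ℝ) :
    IsBounded (OmegaSet Ω' L) := by
  obtain ⟨C, hC⟩ := isBounded_iff_forall_norm_le.1 hb
  refine isBounded_iff_forall_norm_le.2 ⟨max C |L| + 1, fun x hx => ?_⟩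
  obtain ⟨h1, h2⟩ := hx
  have hCL : (0:ℝ) ≤ max C |L| + 1 := by
    have := abs_nonneg L
    have : (0:ℝ) ≤ max C |L| := le_trans this (le_max_right _ _)
    linarith
  rw [pi_norm_le_iff_of_nonneg hCL]
  intro i
  fin_cases i
  · have : ‖x 0‖ ≤ ‖proj2 x‖ := norm_le_pi_norm (proj2 x) 0
    have h3 := hC _ h1
    calc ‖x 0‖ ≤ ‖proj2 x‖ := this
      _ ≤ C := h3
      _ ≤ max C |L| + 1 := by have := le_max_left C |L|; linarith
  · have : ‖x 1‖ ≤ ‖proj2 x‖ := norm_le_pi_norm (proj2 x) 1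
    have h3 := hC _ h1
    calc ‖x 1‖ ≤ ‖proj2 x‖ := this
      _ ≤ C := h3
      _ ≤ max C |L| + 1 := by have := le_max_left C |L|; linarith
  · have : ‖x 2‖ ≤ |L| := by
      rw [Real.norm_eq_abs, abs_le]
      constructor
      · have := abs_nonneg L; linarith [h2.1]
      · have := le_abs_self L; linarith [h2.2]
    calc ‖x 2‖ ≤ |L| := this
      _ ≤ max C |L| + 1 := by have := le_max_right C |L|; linarith

lemma A_eq {φ : (Fin 3 → ℝ) → ℝ} (hφ : Continuous φ)
    {Ω' : Set (Fin 2 → ℝ)} (hb : IsBounded Ω')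
    {L ε r δ : ℝ} {ω : Finset ℝ} (hg : GoodLayers L ε r δ ω) :
    ∫ x, φ x ∂(layerMeasure Ω' ω ε r)
      = ∑ c ∈ ω, (ε / r) * ∫ t in Set.Ioo (c - r / 2) (c + r / 2), Ffun φ Ω' t := by
  obtain ⟨hL, hε, hr, hδ, hrδ, hω, hsep, hbd⟩ := hg
  have hrε : r < ε := by nlinarith
  rw [layerMeasure, integral_smul_measure, ENNReal.toReal_ofReal (by positivity)]
  have hset : layerSet Ω' ω r
      = {x : Fin 3 → ℝ | proj2 x ∈ Ω' ∧ x 2 ∈ ⋃ c ∈ ω, Set.Ioo (c - r / 2) (c + r / 2)} := by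
    ext x
    simp only [layerSet, Set.mem_setOf_eq, Set.mem_iUnion, exists_prop, Set.mem_Ioo]
    refine and_congr_right fun _ => ?_
    constructor
    · rintro ⟨c, hc, habs⟩
      rw [abs_lt] at habs
      exact ⟨c, hc, by linarith [habs.1], by linarith [habs.2]⟩
    · rintro ⟨c, hc, h1, h2⟩
      exact ⟨c, hc, abs_lt.2 ⟨by linarith, by linarith⟩⟩
  have hJb : IsBounded (⋃ c ∈ ω, Set.Ioo (c - r / 2) (c + r / 2)) :=
    (isBounded_biUnion_finset ω).2 fun c _ => Metric.isBounded_Ioo _ _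
  rw [hset, slice_eq hφ hb hJb]
  have hdisj : (↑ω : Set ℝ).Pairwise (Function.onFun Disjoint fun c => Set.Ioo (c - r / 2) (c + r / 2)) := by
    intro a ha b hb' hab
    simp only [Function.onFun]
    rw [Set.disjoint_left]
    rintro t ⟨t1, t2⟩ ⟨t3, t4⟩
    have hs := hsep a ha b hb' hab
    have : |a - b| < r := abs_sub_lt_iff.2 ⟨by linarith, by linarith⟩
    linarith
  rw [show (∫ t in (⋃ c ∈ ω, Set.Ioo (c - r / 2) (c + r / 2)), ∫ y in Ω', φ (Fin.snoc y t))
      = ∫ t in (⋃ c ∈ ω, Set.Ioo (c - r / 2) (c + r / 2)), Ffun φ Ω' t from rfl,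
    integral_biUnion_finset ω (fun c _ => measurableSet_Ioo) hdisj
    (fun c _ => F_integrableOn hφ hb measurableSet_Ioo (Metric.isBounded_Ioo _ _)),
    smul_eq_mul, Finset.mul_sum]

end Aux3

section Aux4

variable {φ : (Fin 3 → ℝ) → ℝ} {Ω' : Set (Fin 2 → ℝ)} {L ε r δ : ℝ} {ω : Finset ℝ}

lemma B_eq (hφ : Continuous φ) (hb : IsBounded Ω')
    (hg : GoodLayers L ε r δ ω) :
    ∫ x in OmegaSet Ω' L, countFn L ε ω (x 2) * φ x
      = ∑ c ∈ ω, if cellCond L ε (idxOf ε c) then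
          ∫ t in Set.Ioo (ε * idxOf ε c - ε / 2) (ε * idxOf ε c + ε / 2), Ffun φ Ω' t
        else 0 := by
  obtain ⟨hL, hε, hr, hδ, hrδ, hω, hsep, hbd⟩ := hg
  have hg' : GoodLayers L ε r δ ω := ⟨hL, hε, hr, hδ, hrδ, hω, hsep, hbd⟩
  have hφΩ : IntegrableOn φ (OmegaSet Ω' L) volume :=
    (hφ.continuousOn.integrableOn_compact (omega_bounded hb L).isCompact_closure).mono_set
      subset_closure
  have step1 : ∫ x in OmegaSet Ω' L, countFn L ε ω (x 2) * φ x
      = ∑ i ∈ Finset.Icc (1 : ℤ) ⌊L / ε⌋, (if cellCond L ε i then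
          ((ω.filter (fun a => ε * i - ε / 2 < a ∧ a ≤ ε * i + ε / 2)).card : ℝ)
            * ∫ t in Set.Ioo (ε * i - ε / 2) (ε * i + ε / 2), Ffun φ Ω' t
        else 0) := by
    have hrw : ∀ x : Fin 3 → ℝ, countFn L ε ω (x 2) * φ x
        = ∑ i ∈ Finset.Icc (1 : ℤ) ⌊L / ε⌋, (if cellCond L ε i then
            ((ω.filter (fun a => ε * i - ε / 2 < a ∧ a ≤ ε * i + ε / 2)).card : ℝ)
              * Set.indicator (Set.Ioo (ε * i - ε / 2) (ε * i + ε / 2)) (fun _ => (1 : ℝ)) (x 2)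
          else 0) * φ x := by
      intro x
      rw [countFn_eq hε ω (x 2), Finset.sum_mul]
    simp only [hrw]
    rw [integral_finset_sum]
    · refine Finset.sum_congr rfl fun i _ => ?_
      by_cases hc : cellCond L ε i
      · simp only [if_pos hc]
        set P : Set (Fin 3 → ℝ) :=
          (fun x : Fin 3 → ℝ => x 2) ⁻¹' (Set.Ioo (ε * i - ε / 2) (ε * i + ε / 2)) with hP
        have hPm : MeasurableSet P := (measurable_pi_apply 2) measurableSet_Ioo
        have hrw2 : ∀ x : Fin 3 → ℝ,
            (((ω.filter (fun a => ε * i - ε / 2 < a ∧ a ≤ ε * i + ε / 2)).card : ℝ)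
              * Set.indicator (Set.Ioo (ε * i - ε / 2) (ε * i + ε / 2)) (fun _ => (1 : ℝ)) (x 2))
              * φ x
            = ((ω.filter (fun a => ε * i - ε / 2 < a ∧ a ≤ ε * i + ε / 2)).card : ℝ)
              * Set.indicator P φ x := by
          intro x
          by_cases h : x 2 ∈ Set.Ioo (ε * i - ε / 2) (ε * i + ε / 2)
          · rw [Set.indicator_of_mem h, Set.indicator_of_mem (by exact h)]
            ring
          · rw [Set.indicator_of_notMem h, Set.indicator_of_notMem (by exact h)]
            ring
        simp only [hrw2]
        rw [MeasureTheory.integral_const_mul, setIntegral_indicator hPm]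
        have hset : OmegaSet Ω' L ∩ P
            = {x : Fin 3 → ℝ | proj2 x ∈ Ω' ∧ x 2 ∈ Set.Ioo (ε * i - ε / 2) (ε * i + ε / 2)} := by
          ext x
          constructor
          · rintro ⟨⟨h1, _⟩, h3⟩
            exact ⟨h1, h3⟩
          · rintro ⟨h1, h3⟩
            exact ⟨⟨h1, Set.Ioo_subset_Ioc_self.trans hc h3⟩, h3⟩
        rw [hset, slice_eq hφ hb (Metric.isBounded_Ioo _ _)]
        rfl
      · simp only [if_neg hc, zero_mul, integral_zero]
    · intro i _
      by_cases hc : cellCond L ε i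
      · simp only [if_pos hc]
        refine Integrable.bdd_mul (c := ((ω.filter (fun a => ε * i - ε / 2 < a ∧ a ≤ ε * i + ε / 2)).card : ℝ)) hφΩ ?_ ?_
        · have hm1 : Measurable fun x : Fin 3 → ℝ =>
              Set.indicator (Set.Ioo (ε * i - ε / 2) (ε * i + ε / 2)) (fun _ => (1 : ℝ)) (x 2) :=
            ((measurable_const.indicator measurableSet_Ioo).comp (measurable_pi_apply 2))
          exact (hm1.const_mul _).aestronglyMeasurable
        · refine ae_of_all _ fun x => ?_
          by_cases h : x 2 ∈ Set.Ioo (ε * i - ε / 2) (ε * i + ε / 2)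
          · rw [Set.indicator_of_mem h]
            simp [Real.norm_eq_abs, abs_of_nonneg]
          · rw [Set.indicator_of_notMem h]
            simp
      · simp only [if_neg hc, zero_mul]
        exact integrable_zero _ _ _
  rw [step1]
  -- reindexing step
  have step2 : ∀ i ∈ Finset.Icc (1 : ℤ) ⌊L / ε⌋, (if cellCond L ε i then
      ((ω.filter (fun a => ε * i - ε / 2 < a ∧ a ≤ ε * i + ε / 2)).card : ℝ)
        * ∫ t in Set.Ioo (ε * i - ε / 2) (ε * i + ε / 2), Ffun φ Ω' t
    else 0) = ∑ a ∈ ω, (if ε * i - ε / 2 < a ∧ a ≤ ε * i + ε / 2 then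
        (if cellCond L ε i then ∫ t in Set.Ioo (ε * i - ε / 2) (ε * i + ε / 2), Ffun φ Ω' t
         else 0) else 0) := by
    intro i _
    by_cases hc : cellCond L ε i
    · simp only [if_pos hc]
      rw [← Finset.sum_filter, Finset.sum_const, nsmul_eq_mul]
    · simp [if_neg hc]
  rw [Finset.sum_congr rfl step2, Finset.sum_comm]
  refine Finset.sum_congr rfl fun a ha => ?_
  rw [Finset.sum_eq_single (idxOf ε a)]
  · rw [if_pos (mem_cell_idx hε a)]
  · intro i _ hne
    by_cases hp : ε * i - ε / 2 < a ∧ a ≤ ε * i + ε / 2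
    · exact absurd (idx_unique hε hp (mem_cell_idx hε a)) hne
    · exact if_neg hp
  · intro h
    exact absurd (idx_mem hg' ha) h

end Aux4

section Aux5

variable {φ : (Fin 3 → ℝ) → ℝ} {Ω' : Set (Fin 2 → ℝ)} {L ε r δ : ℝ} {ω : Finset ℝ}

lemma Ioo_vol (a b : ℝ) (h : a ≤ b) : (volume (Set.Ioo a b)).toReal = b - a := by
  rw [Real.volume_Ioo, ENNReal.toReal_ofReal (by linarith)]

lemma F_diff_bound (hφ : Continuous φ) (hb : IsBounded Ω') {s t η' : ℝ}
    (hmod : ∀ y ∈ Ω', ‖φ (Fin.snoc y s) - φ (Fin.snoc y t)‖ ≤ η') :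
    ‖Ffun φ Ω' s - Ffun φ Ω' t‖ ≤ η' * (volume Ω').toReal := by
  have hsub : Ffun φ Ω' s - Ffun φ Ω' t
      = ∫ y in Ω', (φ (Fin.snoc y s) - φ (Fin.snoc y t)) :=
    (integral_sub (sliceFun_integrableOn hφ hb s) (sliceFun_integrableOn hφ hb t)).symm
  rw [hsub]
  exact norm_setIntegral_le_of_norm_le_const hb.measure_lt_top hmod

lemma key_bound (hφ : Continuous φ) (hb : IsBounded Ω')
    (hg : GoodLayers L ε r δ ω) {C D η' : ℝ} (hC0 : 0 ≤ C) (hη'0 : 0 ≤ η')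
    (hCb : ∀ t ∈ Set.Icc (-1 : ℝ) (L + 1), ∀ y ∈ Ω', ‖φ (Fin.snoc y t)‖ ≤ C)
    (hmod : ∀ s ∈ Set.Icc (-1 : ℝ) (L + 1), ∀ t ∈ Set.Icc (-1 : ℝ) (L + 1), |s - t| < D →
      ∀ y ∈ Ω', ‖φ (Fin.snoc y s) - φ (Fin.snoc y t)‖ ≤ η')
    (hεD : ε < D) (hε1 : ε ≤ 1) :
    |(∫ x, φ x ∂(layerMeasure Ω' ω ε r))
        - ∫ x in OmegaSet Ω' L, countFn L ε ω (x 2) * φ x|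
      ≤ 2 * L * (volume Ω').toReal * η' + ε * (C * (volume Ω').toReal) := by
  obtain ⟨hL, hε, hr, hδ, hrδ, hω, hsep, hbd⟩ := hg
  have hg' : GoodLayers L ε r δ ω := ⟨hL, hε, hr, hδ, hrδ, hω, hsep, hbd⟩
  set V := (volume Ω').toReal with hV
  have hV0 : 0 ≤ V := ENNReal.toReal_nonneg
  have hrε : r < ε := by nlinarith
  rw [A_eq hφ hb hg', B_eq hφ hb hg', ← Finset.sum_sub_distrib]
  have perc : ∀ c ∈ ω,
      |(ε / r) * (∫ t in Set.Ioo (c - r / 2) (c + r / 2), Ffun φ Ω' t)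
        - (if cellCond L ε (idxOf ε c) then
            ∫ t in Set.Ioo (ε * idxOf ε c - ε / 2) (ε * idxOf ε c + ε / 2), Ffun φ Ω' t
          else 0)|
      ≤ 2 * ε * V * η' + (if cellCond L ε (idxOf ε c) then 0 else ε * (C * V)) := by
    intro c hc
    have hcIoo := hω c hc
    have hcb := hbd c hc
    have hcI : c ∈ Set.Icc (-1 : ℝ) (L + 1) := ⟨by linarith [hcIoo.1], by linarith [hcIoo.2]⟩
    have hlayI : ∀ t ∈ Set.Ioo (c - r / 2) (c + r / 2), t ∈ Set.Icc (-1 : ℝ) (L + 1) := by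
      intro t ht
      exact ⟨by linarith [ht.1, hcIoo.1], by linarith [ht.2, hcIoo.2]⟩
    have hintlay : IntegrableOn (Ffun φ Ω') (Set.Ioo (c - r / 2) (c + r / 2)) volume :=
      F_integrableOn hφ hb measurableSet_Ioo (Metric.isBounded_Ioo _ _)
    by_cases hcc : cellCond L ε (idxOf ε c)
    · rw [if_pos hcc, if_pos hcc]
      set i := idxOf ε c with hi
      have hmc := mem_cell_idx hε c
      have hcell := (cond_iff hε i).1 hcc
      have hintcell : IntegrableOn (Ffun φ Ω')
          (Set.Ioo (ε * i - ε / 2) (ε * i + ε / 2)) volume :=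
        F_integrableOn hφ hb measurableSet_Ioo (Metric.isBounded_Ioo _ _)
      have hconstlay : IntegrableOn (fun _ : ℝ => Ffun φ Ω' c)
          (Set.Ioo (c - r / 2) (c + r / 2)) volume :=
        integrableOn_const ((Metric.isBounded_Ioo _ _).measure_lt_top.ne)
      have hconstcell : IntegrableOn (fun _ : ℝ => Ffun φ Ω' c)
          (Set.Ioo (ε * i - ε / 2) (ε * i + ε / 2)) volume :=
        integrableOn_const ((Metric.isBounded_Ioo _ _).measure_lt_top.ne)
      have d1 : ∫ t in Set.Ioo (c - r / 2) (c + r / 2), (Ffun φ Ω' t - Ffun φ Ω' c)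
          = (∫ t in Set.Ioo (c - r / 2) (c + r / 2), Ffun φ Ω' t) - r * Ffun φ Ω' c := by
        rw [integral_sub hintlay hconstlay, setIntegral_const, smul_eq_mul, measureReal_def,
          Ioo_vol _ _ (by linarith)]
        ring_nf
      have d2 : ∫ t in Set.Ioo (ε * i - ε / 2) (ε * i + ε / 2), (Ffun φ Ω' t - Ffun φ Ω' c)
          = (∫ t in Set.Ioo (ε * i - ε / 2) (ε * i + ε / 2), Ffun φ Ω' t)
            - ε * Ffun φ Ω' c := by
        rw [integral_sub hintcell hconstcell, setIntegral_const, smul_eq_mul, measureReal_def,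
          Ioo_vol _ _ (by linarith)]
        ring_nf
      have b1 : ‖∫ t in Set.Ioo (c - r / 2) (c + r / 2), (Ffun φ Ω' t - Ffun φ Ω' c)‖
          ≤ (η' * V) * r := by
        have := norm_setIntegral_le_of_norm_le_const (μ := volume)
          (s := Set.Ioo (c - r / 2) (c + r / 2)) (C := η' * V)
          ((Metric.isBounded_Ioo _ _).measure_lt_top)
          (fun t ht => F_diff_bound hφ hb
            (hmod t (hlayI t ht) c hcI (by
              rw [abs_sub_lt_iff]
              exact ⟨by linarith [ht.2], by linarith [ht.1]⟩) ))
        calc ‖_‖ ≤ (η' * V) * (volume (Set.Ioo (c - r / 2) (c + r / 2))).toReal := this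
          _ = (η' * V) * r := by rw [Ioo_vol _ _ (by linarith)]; ring_nf
      have b2 : ‖∫ t in Set.Ioo (ε * i - ε / 2) (ε * i + ε / 2), (Ffun φ Ω' t - Ffun φ Ω' c)‖
          ≤ (η' * V) * ε := by
        have := norm_setIntegral_le_of_norm_le_const (μ := volume)
          (s := Set.Ioo (ε * i - ε / 2) (ε * i + ε / 2)) (C := η' * V)
          ((Metric.isBounded_Ioo _ _).measure_lt_top)
          (fun t ht => F_diff_bound hφ hb
            (hmod t ⟨by linarith [ht.1, hcell.1], by linarith [ht.2, hcell.2]⟩ c hcI (by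
              rw [abs_sub_lt_iff]
              exact ⟨by linarith [ht.2, hmc.1], by linarith [ht.1, hmc.2]⟩) ))
        calc ‖_‖ ≤ (η' * V) * (volume (Set.Ioo (ε * i - ε / 2) (ε * i + ε / 2))).toReal := this
          _ = (η' * V) * ε := by rw [Ioo_vol _ _ (by linarith)]; ring_nf
      have heq : (ε / r) * (∫ t in Set.Ioo (c - r / 2) (c + r / 2), Ffun φ Ω' t)
          - (∫ t in Set.Ioo (ε * i - ε / 2) (ε * i + ε / 2), Ffun φ Ω' t)
          = (ε / r) * (∫ t in Set.Ioo (c - r / 2) (c + r / 2), (Ffun φ Ω' t - Ffun φ Ω' c))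
            - (∫ t in Set.Ioo (ε * i - ε / 2) (ε * i + ε / 2),
                (Ffun φ Ω' t - Ffun φ Ω' c)) := by
        rw [d1, d2]
        field_simp
        ring
      rw [heq]
      have hεr : 0 ≤ ε / r := by positivity
      calc |(ε / r) * (∫ t in Set.Ioo (c - r / 2) (c + r / 2), (Ffun φ Ω' t - Ffun φ Ω' c))
            - (∫ t in Set.Ioo (ε * i - ε / 2) (ε * i + ε / 2), (Ffun φ Ω' t - Ffun φ Ω' c))|
          ≤ |(ε / r) * (∫ t in Set.Ioo (c - r / 2) (c + r / 2), (Ffun φ Ω' t - Ffun φ Ω' c))|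
            + |∫ t in Set.Ioo (ε * i - ε / 2) (ε * i + ε / 2),
                (Ffun φ Ω' t - Ffun φ Ω' c)| := abs_sub _ _
        _ ≤ (ε / r) * ((η' * V) * r) + (η' * V) * ε := by
            rw [abs_mul, abs_of_nonneg hεr]
            have hb1' : |∫ t in Set.Ioo (c - r / 2) (c + r / 2),
                (Ffun φ Ω' t - Ffun φ Ω' c)| ≤ (η' * V) * r := b1
            have hb2' : |∫ t in Set.Ioo (ε * i - ε / 2) (ε * i + ε / 2),
                (Ffun φ Ω' t - Ffun φ Ω' c)| ≤ (η' * V) * ε := b2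
            have := mul_le_mul_of_nonneg_left hb1' hεr
            linarith
        _ ≤ 2 * ε * V * η' + 0 := by
            have : (ε / r) * ((η' * V) * r) = ε * (η' * V) := by field_simp
            rw [this]
            nlinarith
        _ = 2 * ε * V * η' + (0 : ℝ) := rfl
    · rw [if_neg hcc, if_neg hcc, sub_zero]
      have hFb : ∀ t ∈ Set.Ioo (c - r / 2) (c + r / 2), ‖Ffun φ Ω' t‖ ≤ C * V :=
        fun t ht => F_bound hφ hb (hCb t (hlayI t ht))
      have := norm_setIntegral_le_of_norm_le_const (μ := volume)
        (s := Set.Ioo (c - r / 2) (c + r / 2)) (C := C * V)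
        ((Metric.isBounded_Ioo _ _).measure_lt_top) hFb
      have hεr : 0 ≤ ε / r := by positivity
      have h2 : |∫ t in Set.Ioo (c - r / 2) (c + r / 2), Ffun φ Ω' t| ≤ (C * V) * r := by
        calc |_| ≤ (C * V) * (volume (Set.Ioo (c - r / 2) (c + r / 2))).toReal := this
          _ = (C * V) * r := by rw [Ioo_vol _ _ (by linarith)]; ring_nf
      rw [abs_mul, abs_of_nonneg hεr]
      have h3 := mul_le_mul_of_nonneg_left h2 hεr
      have h4 : (ε / r) * ((C * V) * r) = ε * (C * V) := by field_simp
      have h5 : 0 ≤ 2 * ε * V * η' := by positivity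
      linarith
  calc |∑ c ∈ ω, ((ε / r) * (∫ t in Set.Ioo (c - r / 2) (c + r / 2), Ffun φ Ω' t)
        - (if cellCond L ε (idxOf ε c) then
            ∫ t in Set.Ioo (ε * idxOf ε c - ε / 2) (ε * idxOf ε c + ε / 2), Ffun φ Ω' t
          else 0))|
      ≤ ∑ c ∈ ω, |(ε / r) * (∫ t in Set.Ioo (c - r / 2) (c + r / 2), Ffun φ Ω' t)
        - (if cellCond L ε (idxOf ε c) then
            ∫ t in Set.Ioo (ε * idxOf ε c - ε / 2) (ε * idxOf ε c + ε / 2), Ffun φ Ω' t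
          else 0)| := Finset.abs_sum_le_sum_abs _ _
    _ ≤ ∑ c ∈ ω, (2 * ε * V * η' + (if cellCond L ε (idxOf ε c) then 0 else ε * (C * V))) :=
        Finset.sum_le_sum perc
    _ = ω.card * (2 * ε * V * η')
        + ∑ c ∈ ω, (if cellCond L ε (idxOf ε c) then 0 else ε * (C * V)) := by
        rw [Finset.sum_add_distrib, Finset.sum_const, nsmul_eq_mul]
    _ ≤ 2 * L * V * η' + ε * (C * V) := by
        have hcard := card_bound hg'
        have hnn : 0 ≤ 2 * V * η' := by positivity
        have hmm := mul_le_mul_of_nonneg_right hcard hnn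
        have t1 : (ω.card : ℝ) * (2 * ε * V * η') ≤ 2 * L * V * η' := by nlinarith
        have t2 : ∑ c ∈ ω, (if cellCond L ε (idxOf ε c) then 0 else ε * (C * V))
            ≤ ε * (C * V) := by
          by_cases hex : ∃ c₀ ∈ ω, ¬ cellCond L ε (idxOf ε c₀)
          · obtain ⟨c₀, hc₀, hbad⟩ := hex
            rw [Finset.sum_eq_single c₀]
            · rw [if_neg hbad]
            · intro b hbω hne
              by_cases hcb : cellCond L ε (idxOf ε b)
              · rw [if_pos hcb]
              · exact absurd (bad_unique hg' hbω hc₀ hcb hbad) hne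
            · intro h; exact absurd hc₀ h
          · push_neg at hex
            rw [Finset.sum_eq_zero (fun c hc => if_pos (hex c hc))]
            positivity
        linarith

end Aux5

/-- if the counting functions `n_ε` converge weakly* in `L^∞(Ω)` to `n`,
then the rescaled layer measures `m_ε = (ε/r_ε) 1_{B_ε} ℒ³⌊Ω` converge weakly* in
`ℳ(Ω̄)` to `n ℒ³⌊Ω`: for every continuous `φ`, `∫ φ dm_ε → ∫_Ω φ n dx`. -/
theorem stmt8 (Ω' : Set (Fin 2 → ℝ)) (hΩ'open : IsOpen Ω') (hΩ'bdd : IsBounded Ω')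
    (L : ℝ) (ε r : ℕ → ℝ) (δ : ℝ) (ω : ℕ → Finset ℝ)
    (hgood : ∀ k, GoodLayers L (ε k) (r k) δ (ω k))
    (hε0 : Tendsto ε atTop (𝓝 0))
    (n : (Fin 3 → ℝ) → ℝ)
    (hn : NConv Ω' L ε ω n) :
    ∀ φ : (Fin 3 → ℝ) → ℝ, Continuous φ →
      Tendsto (fun k => ∫ x, φ x ∂(layerMeasure Ω' (ω k) (ε k) (r k)))
        atTop (𝓝 (∫ x in OmegaSet Ω' L, φ x * n x)) := by
  intro φ hφ
  have hL : 0 < L := (hgood 0).1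
  have hφΩ : Integrable φ (volume.restrict (OmegaSet Ω' L)) :=
    (hφ.continuousOn.integrableOn_compact (omega_bounded hΩ'bdd L).isCompact_closure).mono_set
      subset_closure
  have hB := hn φ hφΩ
  have hgoal : (∫ x in OmegaSet Ω' L, n x * φ x) = ∫ x in OmegaSet Ω' L, φ x * n x := by
    simp only [mul_comm]
  rw [← hgoal]
  set V := (volume Ω').toReal with hV
  have hV0 : 0 ≤ V := ENNReal.toReal_nonneg
  have hdiff : Tendsto (fun k => (∫ x, φ x ∂(layerMeasure Ω' (ω k) (ε k) (r k)))
      - ∫ x in OmegaSet Ω' L, countFn L (ε k) (ω k) (x 2) * φ x) atTop (𝓝 0) := by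
    rw [NormedAddCommGroup.tendsto_nhds_zero]
    intro η hη
    set K := (Set.Icc (-1 : ℝ) (L + 1)) ×ˢ closure Ω' with hK
    have hKc : IsCompact K := isCompact_Icc.prod hΩ'bdd.isCompact_closure
    obtain ⟨C₀, hC₀⟩ := hKc.exists_bound_of_continuousOn (phi_cont hφ).continuousOn
    set C := max C₀ 0 with hC
    have hC0 : 0 ≤ C := le_max_right _ _
    have hCb : ∀ t ∈ Set.Icc (-1 : ℝ) (L + 1), ∀ y ∈ Ω', ‖φ (Fin.snoc y t)‖ ≤ C :=
      fun t ht y hy =>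
        le_trans (hC₀ (t, y) ⟨ht, subset_closure hy⟩) (le_max_left _ _)
    set M := C * V with hM
    have hM0 : 0 ≤ M := mul_nonneg hC0 hV0
    set η' := η / (4 * L * V + 2) with hη'
    have hη'0 : 0 < η' := by positivity
    have hUC := hKc.uniformContinuousOn_of_continuous (phi_cont hφ).continuousOn
    rw [Metric.uniformContinuousOn_iff] at hUC
    obtain ⟨D, hD0, hDmod⟩ := hUC η' hη'0
    have hmod : ∀ s ∈ Set.Icc (-1 : ℝ) (L + 1), ∀ t ∈ Set.Icc (-1 : ℝ) (L + 1),
        |s - t| < D → ∀ y ∈ Ω', ‖φ (Fin.snoc y s) - φ (Fin.snoc y t)‖ ≤ η' := by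
      intro s hs t ht hst y hy
      have hd : dist ((s, y) : ℝ × (Fin 2 → ℝ)) ((t, y) : ℝ × (Fin 2 → ℝ)) < D := by
        rw [Prod.dist_eq]
        simp only [dist_self]
        rw [Real.dist_eq, max_eq_left (abs_nonneg _)]
        exact hst
      have := hDmod (s, y) ⟨hs, subset_closure hy⟩ (t, y) ⟨ht, subset_closure hy⟩ hd
      rw [Real.dist_eq] at this
      exact le_of_lt this
    have h4 : (0:ℝ) < 4 * L * V + 2 := by positivity
    have hb1 : 2 * L * V * η' < η / 2 := by
      rw [hη']
      rw [show 2 * L * V * (η / (4 * L * V + 2)) = (2 * L * V) * η / (4 * L * V + 2) by ring,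
        div_lt_div_iff₀ h4 (by norm_num : (0:ℝ) < 2)]
      nlinarith
    have hsmall : (0 : ℝ) < min (min D 1) (η / (2 * M + 1)) := by positivity
    filter_upwards [hε0.eventually_lt_const hsmall] with k hk
    have hεD : ε k < D := lt_of_lt_of_le hk ((min_le_left _ _).trans (min_le_left _ _))
    have hε1 : ε k ≤ 1 := le_of_lt (lt_of_lt_of_le hk ((min_le_left _ _).trans (min_le_right _ _)))
    have hεM : ε k < η / (2 * M + 1) := lt_of_lt_of_le hk (min_le_right _ _)
    have hεpos : 0 < ε k := (hgood k).2.1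
    have hb2 : ε k * M ≤ η / 2 := by
      have h1 : ε k * M ≤ (η / (2 * M + 1)) * M :=
        mul_le_mul_of_nonneg_right hεM.le hM0
      have h2 : (η / (2 * M + 1)) * M ≤ η / 2 := by
        rw [div_mul_eq_mul_div, div_le_div_iff₀ (by positivity) (by norm_num : (0:ℝ) < 2)]
        nlinarith
      linarith
    rw [Real.norm_eq_abs]
    calc |(∫ x, φ x ∂(layerMeasure Ω' (ω k) (ε k) (r k)))
        - ∫ x in OmegaSet Ω' L, countFn L (ε k) (ω k) (x 2) * φ x|
        ≤ 2 * L * V * η' + ε k * (C * V) :=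
          key_bound hφ hΩ'bdd (hgood k) hC0 hη'0.le hCb hmod hεD hε1
      _ < η := by
          have : ε k * (C * V) = ε k * M := by rw [hM]
          rw [this]
          linarith
  have := hdiff.add hB
  rw [zero_add] at this
  refine this.congr fun k => ?_
  ring
end
end

section
/- Let φ ∈ C(Ω̄ × Ī) and let m_ε be the rescaled layer measure with m_ε ⇀* n L³⌊Ω. Then lim_{ε→0} ∫_Ω |φ(x, y_ε(x₃)/r_ε)|² dm_ε = ∫_{Ω×I} |φ(x, y₃)|² n dx dy₃. -/
open MeasureTheory Set Filter Topology Bornology Classical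

noncomputable section

set_option linter.unusedSectionVars false

namespace Stmt13Aux

/-- integrability from boundedness on a finite measure. -/
lemma integrable_of_bdd {α : Type*} [MeasurableSpace α] {μ : Measure α} {f : α → ℝ}
    (hm : AEStronglyMeasurable f μ) {C : ℝ} (hfin : μ Set.univ < ⊤)
    (hC : ∀ᵐ a ∂μ, |f a| ≤ C) : Integrable f μ := by
  haveI : IsFiniteMeasure μ := ⟨hfin⟩
  exact Integrable.mono' (integrable_const C) hm
    (hC.mono fun a ha => by simpa [Real.norm_eq_abs] using ha)

/-- `|∫ over I| ≤ B` helper. -/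
lemma abs_setIntegral_I_le {u : ℝ → ℝ} {B : ℝ}
    (hm : AEStronglyMeasurable u (volume.restrict (Set.Ioo (-(1/2) : ℝ) (1/2))))
    (hB : ∀ y ∈ Set.Ioo (-(1/2) : ℝ) (1/2), |u y| ≤ B) :
    |∫ y in Set.Ioo (-(1/2) : ℝ) (1/2), u y| ≤ B := by
  have h := norm_setIntegral_le_of_norm_le_const (μ := volume)
    (s := Set.Ioo (-(1/2) : ℝ) (1/2)) (C := B)
    (by rw [Real.volume_Ioo]; exact ENNReal.ofReal_lt_top)
    (fun y hy => by rw [Real.norm_eq_abs]; exact hB y hy)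
  rw [Real.norm_eq_abs, measureReal_def, Real.volume_Ioo] at h
  calc |∫ y in Set.Ioo (-(1/2) : ℝ) (1/2), u y|
      ≤ B * (ENNReal.ofReal (1/2 - -(1/2))).toReal := h
    _ = B := by rw [ENNReal.toReal_ofReal (by norm_num)]; norm_num


/-- index of the cell containing `c`. -/
def iCell (ε c : ℝ) : ℤ := ⌈c / ε - 1/2⌉

lemma mem_cell_iff {ε : ℝ} (hε : 0 < ε) {t : ℝ} {i : ℤ} :
    t ∈ Set.Ioc (ε * i - ε/2) (ε * i + ε/2) ↔ i = iCell ε t := by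
  constructor
  · rintro ⟨h1, h2⟩
    have h1' : (i : ℝ) - 1/2 < t / ε := by rw [lt_div_iff₀ hε]; nlinarith
    have h2' : t / ε ≤ (i : ℝ) + 1/2 := by rw [div_le_iff₀ hε]; nlinarith
    exact (Int.ceil_eq_iff.mpr ⟨by linarith, by linarith⟩).symm
  · rintro rfl
    have h1 : t / ε - 1/2 ≤ (iCell ε t : ℝ) := Int.le_ceil _
    have h2 : ((iCell ε t : ℤ) : ℝ) < t / ε - 1/2 + 1 := Int.ceil_lt_add_one _
    have ht : t = (t / ε) * ε := by field_simp
    constructor <;> nlinarith [mul_lt_mul_of_pos_right h2 hε, mul_le_mul_of_nonneg_right h1 hε.le]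

lemma self_mem_cell {ε : ℝ} (hε : 0 < ε) (t : ℝ) :
    t ∈ Set.Ioc (ε * iCell ε t - ε/2) (ε * iCell ε t + ε/2) :=
  (mem_cell_iff hε).mpr rfl

/-- the predicate selecting layers whose cell lies inside `(0,L)`. -/
def goodCell (L ε c : ℝ) : Prop :=
  Set.Ioc (ε * iCell ε c - ε/2) (ε * iCell ε c + ε/2) ⊆ Set.Ioo 0 L

lemma countFn_eq (L : ℝ) {ε : ℝ} (hε : 0 < ε) (ω : Finset ℝ) (t : ℝ) :
    countFn L ε ω t = ∑ c ∈ ω.filter (fun c => goodCell L ε c),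
      Set.indicator (Set.Ioo (ε * iCell ε c - ε/2) (ε * iCell ε c + ε/2))
        (fun _ => (1 : ℝ)) t := by
  classical
  have hsingle : countFn L ε ω t =
      (if Set.Ioc (ε * iCell ε t - ε / 2) (ε * iCell ε t + ε / 2) ⊆ Set.Ioo 0 L then
        ((ω.filter (fun a => ε * iCell ε t - ε / 2 < a ∧ a ≤ ε * iCell ε t + ε / 2)).card : ℝ)
          * Set.indicator (Set.Ioo (ε * iCell ε t - ε / 2) (ε * iCell ε t + ε / 2))
            (fun _ => (1 : ℝ)) t
      else 0) := by
    refine tsum_eq_single (iCell ε t) ?_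
    intro i hi
    by_cases hsub : Set.Ioc (ε * i - ε / 2) (ε * i + ε / 2) ⊆ Set.Ioo 0 L
    · rw [if_pos hsub]
      have : t ∉ Set.Ioo (ε * i - ε / 2) (ε * i + ε / 2) := by
        intro ht
        exact hi ((mem_cell_iff hε).mp (Set.Ioo_subset_Ioc_self ht))
      rw [Set.indicator_of_notMem this, mul_zero]
    · rw [if_neg hsub]
  rw [hsingle]
  by_cases hsub : Set.Ioc (ε * iCell ε t - ε / 2) (ε * iCell ε t + ε / 2) ⊆ Set.Ioo 0 L
  · by_cases hmem : t ∈ Set.Ioo (ε * iCell ε t - ε / 2) (ε * iCell ε t + ε / 2)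
    · rw [if_pos hsub, Set.indicator_of_mem hmem, mul_one, Finset.card_filter,
        Finset.sum_filter]
      push_cast
      refine Finset.sum_congr rfl ?_
      intro c _
      rw [Set.indicator_apply]
      by_cases h : ε * (iCell ε t : ℝ) - ε / 2 < c ∧ c ≤ ε * (iCell ε t : ℝ) + ε / 2
      · have hic : iCell ε t = iCell ε c := (mem_cell_iff hε).mp h
        have hgc : goodCell L ε c := by unfold goodCell; rw [← hic]; exact hsub
        rw [if_pos h, if_pos hgc, ← hic, if_pos hmem]
      · rw [if_neg h]
        by_cases hgc : goodCell L ε c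
        · rw [if_pos hgc]
          by_cases hti : t ∈ Set.Ioo (ε * (iCell ε c : ℝ) - ε / 2) (ε * (iCell ε c : ℝ) + ε / 2)
          · exfalso
            have hcc : iCell ε c = iCell ε t :=
              (mem_cell_iff hε).mp (Set.Ioo_subset_Ioc_self hti)
            have := self_mem_cell hε c
            rw [hcc] at this
            exact h this
          · rw [if_neg hti]
        · rw [if_neg hgc]
    · rw [if_pos hsub, Set.indicator_of_notMem hmem, mul_zero]
      refine (Finset.sum_eq_zero ?_).symm
      intro c hc
      refine Set.indicator_of_notMem ?_ _
      intro hti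
      have hcc : iCell ε c = iCell ε t :=
        (mem_cell_iff hε).mp (Set.Ioo_subset_Ioc_self hti)
      rw [hcc] at hti
      exact hmem hti
  · rw [if_neg hsub]
    refine (Finset.sum_eq_zero ?_).symm
    intro c hc
    rw [Finset.mem_filter] at hc
    refine Set.indicator_of_notMem ?_ _
    intro hti
    have hcc : iCell ε c = iCell ε t :=
      (mem_cell_iff hε).mp (Set.Ioo_subset_Ioc_self hti)
    have hgc := hc.2
    unfold goodCell at hgc
    rw [hcc] at hgc
    exact hsub hgc


lemma Dk_eq (r : ℝ) (ω : Finset ℝ) :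
    {t : ℝ | ∃ c ∈ ω, |t - c| < r/2} = ⋃ c ∈ ω, Set.Ioo (c - r/2) (c + r/2) := by
  ext t
  simp only [Set.mem_setOf_eq, Set.mem_iUnion, Set.mem_Ioo, exists_prop]
  constructor
  · rintro ⟨c, hc, habs⟩
    rcases abs_sub_lt_iff.mp habs with ⟨h1, h2⟩
    exact ⟨c, hc, by linarith, by linarith⟩
  · rintro ⟨c, hc, h1, h2⟩
    exact ⟨c, hc, abs_sub_lt_iff.mpr ⟨by linarith, by linarith⟩⟩

lemma yFn_measurable (r δ : ℝ) (ω : Finset ℝ) : Measurable (yFn r δ ω) := by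
  unfold yFn
  exact Finset.measurable_sum _ fun c _ =>
    (measurable_id.sub_const c).mul
      (Measurable.indicator measurable_const measurableSet_Ioo)

lemma countFn_measurable (L : ℝ) {ε : ℝ} (hε : 0 < ε) (ω : Finset ℝ) :
    Measurable (countFn L ε ω) := by
  have h : countFn L ε ω = fun t => ∑ c ∈ ω.filter (fun c => goodCell L ε c),
      Set.indicator (Set.Ioo (ε * iCell ε c - ε/2) (ε * iCell ε c + ε/2))
        (fun _ => (1 : ℝ)) t := funext (countFn_eq L hε ω)
  rw [h]
  exact Finset.measurable_sum _ fun c _ =>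
    Measurable.indicator measurable_const measurableSet_Ioo

/-- the coordinate splitting `x ↦ (x 2, proj2 x)`. -/
def e3 : (Fin 3 → ℝ) ≃ᵐ ℝ × (Fin 2 → ℝ) :=
  MeasurableEquiv.piFinSuccAbove (fun _ : Fin 3 => ℝ) 2

lemma e3_apply (x : Fin 3 → ℝ) : e3 x = (x 2, proj2 x) := by
  unfold e3 MeasurableEquiv.piFinSuccAbove
  refine Prod.ext rfl ?_
  funext j
  show Fin.removeNth 2 x j = proj2 x j
  rw [show (2 : Fin 3) = Fin.last 2 from rfl]
  simp [Fin.removeNth, Fin.succAbove_last, proj2]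
  fin_cases j <;> rfl

lemma snoc_two (x' : Fin 2 → ℝ) (t : ℝ) : (Fin.snoc x' t : Fin 3 → ℝ) 2 = t := by
  rw [show (2 : Fin 3) = Fin.last 2 from rfl]
  exact Fin.snoc_last _ _

lemma proj2_snoc (x' : Fin 2 → ℝ) (t : ℝ) : proj2 (Fin.snoc x' t) = x' := by
  funext j
  exact Fin.snoc_castSucc _ _ _

lemma e3_symm (t : ℝ) (x' : Fin 2 → ℝ) : e3.symm (t, x') = Fin.snoc x' t := by
  have h : e3 (e3.symm (t, x')) = (t, x') := e3.apply_symm_apply _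
  rw [e3_apply] at h
  have h1 : (e3.symm (t, x')) 2 = t := congrArg Prod.fst h
  have h2 : proj2 (e3.symm (t, x')) = x' := congrArg Prod.snd h
  funext i
  refine Fin.lastCases ?_ ?_ i
  · rw [Fin.snoc_last]
    exact h1
  · intro j
    rw [Fin.snoc_castSucc]
    exact congrFun h2 j

lemma e3_measurePreserving : MeasurePreserving e3 volume (volume.prod volume) := by
  have h := measurePreserving_piFinSuccAbove (fun _ : Fin 3 => (volume : Measure ℝ)) 2
  rw [← MeasureTheory.volume_pi, ← MeasureTheory.volume_pi] at h
  exact h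

lemma snoc_continuous (x' : Fin 2 → ℝ) : Continuous fun t : ℝ => (Fin.snoc x' t : Fin 3 → ℝ) := by
  refine continuous_pi fun i => ?_
  refine Fin.lastCases ?_ ?_ i
  · simp only [Fin.snoc_last]
    exact continuous_id
  · intro j
    simp only [Fin.snoc_castSucc]
    exact continuous_const

lemma fubini_slice {Ω' : Set (Fin 2 → ℝ)} (hΩ'm : MeasurableSet Ω') (hΩfin : volume Ω' < ⊤)
    {D : Set ℝ} (hD : MeasurableSet D) (hDfin : volume D < ⊤)
    {F : (Fin 3 → ℝ) → ℝ} (hFm : Measurable F) {C : ℝ}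
    (hC : ∀ x : Fin 3 → ℝ, proj2 x ∈ Ω' → x 2 ∈ D → |F x| ≤ C) :
    (∫ x in {x : Fin 3 → ℝ | proj2 x ∈ Ω' ∧ x 2 ∈ D}, F x
      = ∫ x' in Ω', ∫ t in D, F (Fin.snoc x' t)) ∧
    Integrable (fun x' => ∫ t in D, F (Fin.snoc x' t)) (volume.restrict Ω') := by
  have hSpre : {x : Fin 3 → ℝ | proj2 x ∈ Ω' ∧ x 2 ∈ D} = e3 ⁻¹' (D ×ˢ Ω') := by
    ext x
    simp only [Set.mem_setOf_eq, Set.mem_preimage, e3_apply, Set.mem_prod]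
    exact and_comm
  have hint : Integrable (fun p : ℝ × (Fin 2 → ℝ) => F (e3.symm p))
      ((volume.restrict D).prod (volume.restrict Ω')) := by
    rw [Measure.prod_restrict]
    refine integrable_of_bdd ((hFm.comp e3.symm.measurable).aestronglyMeasurable)
      (C := C) ?_ ?_
    · rw [Measure.restrict_apply_univ, Measure.prod_prod]
      exact ENNReal.mul_lt_top hDfin hΩfin
    · refine (ae_restrict_mem (hD.prod hΩ'm)).mono fun p hp => ?_
      rcases p with ⟨t, x'⟩
      rw [e3_symm]
      exact hC _ (by rw [proj2_snoc]; exact hp.2) (by rw [snoc_two]; exact hp.1)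
  constructor
  · have h1 : ∫ p in D ×ˢ Ω', F (e3.symm p) ∂((volume : Measure ℝ).prod volume)
        = ∫ x in e3 ⁻¹' (D ×ˢ Ω'), (fun p => F (e3.symm p)) (e3 x) := by
      rw [← e3_measurePreserving.map_eq]
      exact setIntegral_map_equiv e3 (fun p => F (e3.symm p)) (D ×ˢ Ω')
    have h2 : ∀ x, (fun p => F (e3.symm p)) (e3 x) = F x := by
      intro x; simp only [e3.symm_apply_apply]
    calc ∫ x in {x : Fin 3 → ℝ | proj2 x ∈ Ω' ∧ x 2 ∈ D}, F x
        = ∫ x in e3 ⁻¹' (D ×ˢ Ω'), F x := by rw [hSpre]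
      _ = ∫ x in e3 ⁻¹' (D ×ˢ Ω'), (fun p => F (e3.symm p)) (e3 x) := by
          refine setIntegral_congr_fun ?_ fun x _ => (h2 x).symm
          exact e3.measurable (hD.prod hΩ'm)
      _ = ∫ p in D ×ˢ Ω', F (e3.symm p) ∂((volume : Measure ℝ).prod volume) := h1.symm
      _ = ∫ p, F (e3.symm p) ∂((volume.restrict D).prod (volume.restrict Ω')) := by
          rw [Measure.prod_restrict]
      _ = ∫ x' in Ω', ∫ t in D, F (e3.symm (t, x')) :=
          integral_prod_symm _ hint
      _ = ∫ x' in Ω', ∫ t in D, F (Fin.snoc x' t) := by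
          simp only [e3_symm]
  · have := hint.integral_prod_right
    simp only [e3_symm] at this
    exact this


section Geom

variable {L ε r δ : ℝ} {ω : Finset ℝ}
variable (hL : 0 < L) (hε : 0 < ε) (hr : 0 < r) (hδ : 0 < δ) (hrδ : r * (1 + δ) < ε)
  (hsep : ∀ a ∈ ω, ∀ b ∈ ω, a ≠ b → ε ≤ |a - b|)
  (hpos : ∀ a ∈ ω, ε / 2 < a ∧ a < L - ε / 2)

include hε hpos in
lemma iCell_ge_one {c : ℝ} (hc : c ∈ ω) : 1 ≤ iCell ε c := by
  have hm := self_mem_cell hε c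
  have h1 := (hpos c hc).1
  have : (0 : ℝ) < ε * iCell ε c := by
    have := hm.2
    nlinarith
  have : (0 : ℤ) < iCell ε c := by
    by_contra h
    push_neg at h
    have : (iCell ε c : ℝ) ≤ 0 := by exact_mod_cast h
    nlinarith
  omega

include hL hε hpos in
lemma not_goodCell_imp {c : ℝ} (hc : c ∈ ω) (hng : ¬ goodCell L ε c) :
    L - 3 * ε / 2 < c := by
  by_contra h
  push_neg at h
  apply hng
  intro x hx
  have hm := self_mem_cell hε c
  have hi1 : (1 : ℝ) ≤ (iCell ε c : ℝ) := by
    exact_mod_cast iCell_ge_one hε hpos hc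
  constructor
  · have := hx.1; nlinarith
  · have := hx.2
    have := hm.1
    nlinarith

include hL hε hsep hpos in
lemma bad_card : (ω.filter (fun c => ¬ goodCell L ε c)).card ≤ 1 := by
  rw [Finset.card_le_one]
  intro a ha b hb
  rw [Finset.mem_filter] at ha hb
  by_contra hne
  have h1 := not_goodCell_imp hL hε hpos ha.1 ha.2
  have h2 := not_goodCell_imp hL hε hpos hb.1 hb.2
  have h3 := (hpos a ha.1).2
  have h4 := (hpos b hb.1).2
  have := hsep a ha.1 b hb.1 hne
  rcases abs_cases (a - b) with ⟨he, -⟩ | ⟨he, -⟩ <;> nlinarith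

include hε hsep in
lemma iCell_injOn : Set.InjOn (iCell ε) ω := by
  intro a ha b hb hab
  by_contra hne
  have h1 := self_mem_cell hε a
  have h2 := self_mem_cell hε b
  rw [hab] at h1
  have := hsep a ha b hb hne
  have := h1.1; have := h1.2; have := h2.1; have := h2.2
  rcases abs_sub_le_iff.mp (le_refl |a - b|) with ⟨-, -⟩
  rcases abs_cases (a - b) with ⟨he, -⟩ | ⟨he, -⟩ <;> nlinarith [hsep a ha b hb hne]

include hL hε hsep hpos in
lemma card_mul_le : (ω.card : ℝ) * ε ≤ L := by
  have hmap : ∀ c ∈ ω, iCell ε c ∈ Finset.Icc (1 : ℤ) ⌊L / ε⌋ := by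
    intro c hc
    rw [Finset.mem_Icc]
    refine ⟨iCell_ge_one hε hpos hc, Int.le_floor.mpr ?_⟩
    have hm := (self_mem_cell hε c).1
    have := (hpos c hc).2
    rw [le_div_iff₀ hε]
    nlinarith
  have hcard : ω.card ≤ (Finset.Icc (1 : ℤ) ⌊L / ε⌋).card :=
    Finset.card_le_card_of_injOn _ hmap (iCell_injOn hε hsep)
  rw [Int.card_Icc] at hcard
  have hN : (0 : ℤ) ≤ ⌊L / ε⌋ := Int.floor_nonneg.mpr (by positivity)
  have h2 : ((⌊L / ε⌋ + 1 - 1).toNat : ℝ) = ((⌊L / ε⌋ : ℤ) : ℝ) := by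
    have : (⌊L / ε⌋ + 1 - 1) = ⌊L / ε⌋ := by ring
    rw [this]; exact_mod_cast Int.toNat_of_nonneg hN
  have h3 : (ω.card : ℝ) ≤ ((⌊L / ε⌋ : ℤ) : ℝ) := by
    rw [← h2]; exact_mod_cast hcard
  have h4 : ((⌊L / ε⌋ : ℤ) : ℝ) ≤ L / ε := Int.floor_le _
  have := le_trans h3 h4
  calc (ω.card : ℝ) * ε ≤ (L / ε) * ε := by nlinarith
    _ = L := by field_simp

include hsep in
lemma layers_disjoint' {ρ : ℝ} (hρ : ρ ≤ ε) :
    (ω : Set ℝ).Pairwise (Function.onFun Disjoint (fun c => Set.Ioo (c - ρ/2) (c + ρ/2))) := by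
  intro a ha b hb hne
  rw [Function.onFun, Set.disjoint_left]
  intro t hta htb
  have := hsep a ha b hb hne
  have h1 := hta.1; have h2 := hta.2; have h3 := htb.1; have h4 := htb.2
  rcases abs_cases (a - b) with ⟨he, -⟩ | ⟨he, -⟩ <;> nlinarith


include hr hδ hrδ hsep in
lemma yFn_eq {c t : ℝ} (hc : c ∈ ω) (ht : t ∈ Set.Ioo (c - r/2) (c + r/2)) :
    yFn r δ ω t = t - c := by
  have hsub : t ∈ Set.Ioo (c - r * (1 + δ)/2) (c + r * (1 + δ)/2) := by
    constructor
    · have := ht.1; nlinarith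
    · have := ht.2; nlinarith
  unfold yFn
  rw [Finset.sum_eq_single_of_mem c hc]
  · rw [Set.indicator_of_mem hsub, mul_one]
  · intro b hb hbc
    have hdisj := layers_disjoint' hsep (ρ := r * (1 + δ)) hrδ.le hc hb hbc.symm
    have hd : Disjoint (Set.Ioo (c - r * (1 + δ)/2) (c + r * (1 + δ)/2))
        (Set.Ioo (b - r * (1 + δ)/2) (b + r * (1 + δ)/2)) := hdisj
    have : t ∉ Set.Ioo (b - r * (1 + δ)/2) (b + r * (1 + δ)/2) := fun hmem =>
      (Set.disjoint_right.mp hd hmem) hsub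
    rw [Set.indicator_of_notMem this, mul_zero]

include hr hδ hrδ hsep in
/-- A-side 1D identity: change of variables on each layer. -/
lemma Aside (ψ : ℝ → ℝ → ℝ) (hψ : Continuous fun p : ℝ × ℝ => ψ p.1 p.2) :
    ∫ t in {t : ℝ | ∃ c ∈ ω, |t - c| < r / 2}, ψ t (yFn r δ ω t / r) ^ 2
      = ∑ c ∈ ω, r * ∫ y in Set.Ioo (-(1/2) : ℝ) (1/2), ψ (c + r * y) y ^ 2 := by
  have hset : {t : ℝ | ∃ c ∈ ω, |t - c| < r / 2}
      = ⋃ c ∈ ω, Set.Ioo (c - r/2) (c + r/2) := by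
    ext t
    simp only [Set.mem_setOf_eq, Set.mem_iUnion, Set.mem_Ioo, exists_prop]
    constructor
    · rintro ⟨c, hc, habs⟩
      rcases abs_sub_lt_iff.mp habs with ⟨h1, h2⟩
      exact ⟨c, hc, by linarith, by linarith⟩
    · rintro ⟨c, hc, h1, h2⟩
      exact ⟨c, hc, abs_sub_lt_iff.mpr ⟨by linarith, by linarith⟩⟩
  have hrε : r ≤ ε := by nlinarith
  rw [hset]
  rw [integral_biUnion_finset ω (fun c _ => measurableSet_Ioo)
    (layers_disjoint' hsep hrε)]
  · refine Finset.sum_congr rfl ?_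
    intro c hc
    have heq : ∫ t in Set.Ioo (c - r/2) (c + r/2), ψ t (yFn r δ ω t / r) ^ 2
        = ∫ t in Set.Ioo (c - r/2) (c + r/2), ψ t ((t - c) / r) ^ 2 := by
      refine setIntegral_congr_fun measurableSet_Ioo ?_
      intro t ht
      dsimp only
      rw [yFn_eq hr hδ hrδ hsep hc ht]
    rw [heq]
    have hfun : ∀ t : ℝ, ψ t ((t - c)/r) ^ 2
        = (fun y => ψ (c + r * y) y ^ 2) ((t - c)/r) := by
      intro t
      have : c + r * ((t - c)/r) = t := by field_simp; ring
      dsimp only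
      rw [this]
    calc ∫ t in Set.Ioo (c - r/2) (c + r/2), ψ t ((t - c) / r) ^ 2
        = ∫ t in Set.Ioc (c - r/2) (c + r/2), (fun y => ψ (c + r * y) y ^ 2) ((t - c)/r) := by
          rw [integral_Ioc_eq_integral_Ioo]
          exact setIntegral_congr_fun measurableSet_Ioo (fun t _ => hfun t)
      _ = ∫ t in (c - r/2)..(c + r/2), (fun s => (fun y => ψ (c + r * y) y ^ 2) (s / r)) (t - c) := by
          rw [intervalIntegral.integral_of_le (by linarith)]
      _ = ∫ s in (c - r/2 - c)..(c + r/2 - c), (fun s => (fun y => ψ (c + r * y) y ^ 2) (s / r)) s := by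
          exact intervalIntegral.integral_comp_sub_right
            (fun s => (fun y => ψ (c + r * y) y ^ 2) (s / r)) c
      _ = ∫ s in (-(r/2))..(r/2), (fun y => ψ (c + r * y) y ^ 2) (s / r) := by
          rw [show c - r/2 - c = -(r/2) by ring, show c + r/2 - c = r/2 by ring]
      _ = r • ∫ y in (-(r/2)/r)..((r/2)/r), ψ (c + r * y) y ^ 2 := by
          exact intervalIntegral.integral_comp_div (c := r)
            (fun y => ψ (c + r * y) y ^ 2) (ne_of_gt hr)
      _ = r * ∫ y in Set.Ioo (-(1/2) : ℝ) (1/2), ψ (c + r * y) y ^ 2 := by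
          rw [show -(r/2)/r = -(1/2 : ℝ) by field_simp,
            show (r/2)/r = (1/2 : ℝ) by field_simp,
            intervalIntegral.integral_of_le (by norm_num : -(1/2:ℝ) ≤ 1/2),
            integral_Ioc_eq_integral_Ioo, smul_eq_mul]
  · intro c hc
    have hcont : Continuous fun t => ψ t ((t - c)/r) ^ 2 := by
      have : Continuous fun t : ℝ => (t, (t - c)/r) := by fun_prop
      exact ((hψ.comp this).pow 2)
    refine (hcont.integrableOn_Icc.mono_set Set.Ioo_subset_Icc_self).congr_fun ?_ measurableSet_Ioo
    intro t ht
    dsimp only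
    rw [yFn_eq hr hδ hrδ hsep hc ht]


omit hL hε hr hδ hrδ hsep hpos in
lemma cell_Ioo_subset {c : ℝ} (hg : goodCell L ε c) :
    Set.Ioo (ε * iCell ε c - ε/2) (ε * iCell ε c + ε/2) ⊆ Set.Ioo 0 L :=
  fun t ht => hg (Set.Ioo_subset_Ioc_self ht)

include hε in
lemma countFn_nonneg (t : ℝ) : 0 ≤ countFn L ε ω t := by
  rw [countFn_eq L hε ω t]
  exact Finset.sum_nonneg fun c _ => Set.indicator_nonneg (fun _ _ => zero_le_one) t

include hε in
lemma countFn_le (t : ℝ) : countFn L ε ω t ≤ (ω.card : ℝ) := by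
  rw [countFn_eq L hε ω t]
  calc ∑ c ∈ ω.filter (fun c => goodCell L ε c),
        Set.indicator (Set.Ioo (ε * iCell ε c - ε/2) (ε * iCell ε c + ε/2))
          (fun _ => ( 1:ℝ)) t
      ≤ (ω.filter (fun c => goodCell L ε c)).card • (1 : ℝ) := by
        refine Finset.sum_le_card_nsmul _ _ _ fun c _ => ?_
        rw [Set.indicator_apply]
        split_ifs <;> norm_num
    _ ≤ (ω.card : ℝ) := by
        rw [nsmul_eq_mul, mul_one]
        exact_mod_cast Finset.card_filter_le _ _

include hL hε in
lemma Bside (f : ℝ → ℝ) (hf : Measurable f) {C : ℝ} (hC : ∀ t ∈ Set.Ioo 0 L, |f t| ≤ C) :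
    ∫ t in Set.Ioo 0 L, countFn L ε ω t * f t
      = ∑ c ∈ ω.filter (fun c => goodCell L ε c),
          ∫ t in Set.Ioo (ε * iCell ε c - ε/2) (ε * iCell ε c + ε/2), f t := by
  have h1 : ∀ t, countFn L ε ω t * f t = ∑ c ∈ ω.filter (fun c => goodCell L ε c),
      Set.indicator (Set.Ioo (ε * iCell ε c - ε/2) (ε * iCell ε c + ε/2)) f t := by
    intro t
    rw [countFn_eq L hε ω t, Finset.sum_mul]
    refine Finset.sum_congr rfl fun c _ => ?_
    by_cases h : t ∈ Set.Ioo (ε * iCell ε c - ε/2) (ε * iCell ε c + ε/2)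
    · rw [Set.indicator_of_mem h, Set.indicator_of_mem h, one_mul]
    · rw [Set.indicator_of_notMem h, Set.indicator_of_notMem h, zero_mul]
  simp only [h1]
  rw [integral_finset_sum]
  · refine Finset.sum_congr rfl fun c hc => ?_
    have hg : goodCell L ε c := (Finset.mem_filter.mp hc).2
    have hsub := cell_Ioo_subset hg
    rw [integral_indicator measurableSet_Ioo, Measure.restrict_restrict measurableSet_Ioo,
      Set.inter_eq_self_of_subset_left hsub]
  · intro c _
    refine integrable_of_bdd ((hf.indicator measurableSet_Ioo).aestronglyMeasurable)
      (C := max C 0) ?_ ?_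
    · rw [Measure.restrict_apply_univ, Real.volume_Ioo]; exact ENNReal.ofReal_lt_top
    · refine (ae_restrict_mem measurableSet_Ioo).mono fun t ht => ?_
      by_cases h : t ∈ Set.Ioo (ε * iCell ε c - ε/2) (ε * iCell ε c + ε/2)
      · rw [Set.indicator_of_mem h]
        exact le_max_of_le_left (hC t ht)
      · rw [Set.indicator_of_notMem h, abs_zero]
        exact le_max_right _ _


include hL hε hr hδ hrδ hsep hpos in
lemma oneD_bound (ψ : ℝ → ℝ → ℝ) (hψ : Continuous fun p : ℝ × ℝ => ψ p.1 p.2)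
    (η M : ℝ) (hη0 : 0 ≤ η) (hM0 : 0 ≤ M)
    (hM : ∀ s ∈ Set.Ioo 0 L, ∀ y ∈ Set.Ioo (-(1/2) : ℝ) (1/2), |ψ s y ^ 2| ≤ M)
    (hη : ∀ s ∈ Set.Ioo 0 L, ∀ t ∈ Set.Ioo 0 L, |s - t| ≤ 2 * ε →
      ∀ y ∈ Set.Ioo (-(1/2) : ℝ) (1/2), |ψ s y ^ 2 - ψ t y ^ 2| ≤ η) :
    |(ε / r) * (∫ t in {t : ℝ | ∃ c ∈ ω, |t - c| < r / 2}, ψ t (yFn r δ ω t / r) ^ 2)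
       - ∫ t in Set.Ioo 0 L, countFn L ε ω t * (∫ y in Set.Ioo (-(1/2) : ℝ) (1/2), ψ t y ^ 2)|
      ≤ L * η + ε * M := by
  have hcont2 : Continuous fun p : ℝ × ℝ => ψ p.1 p.2 ^ 2 := hψ.pow 2
  have hrε : r < ε := by nlinarith
  set I : Set ℝ := Set.Ioo (-(1/2) : ℝ) (1/2) with hI
  set J : ℝ → ℝ := fun c => ∫ y in I, ψ (c + r * y) y ^ 2 with hJdef
  set f : ℝ → ℝ := fun t => ∫ y in I, ψ t y ^ 2 with hfdef
  have hJcont : ∀ c : ℝ, Continuous fun y : ℝ => ψ (c + r * y) y ^ 2 := by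
    intro c
    exact (hψ.comp (by fun_prop : Continuous fun y : ℝ => ((c + r * y : ℝ), y))).pow 2
  have hslice : ∀ t : ℝ, Continuous fun y : ℝ => ψ t y ^ 2 := by
    intro t
    exact (hψ.comp (by fun_prop : Continuous fun y : ℝ => ((t : ℝ), y))).pow 2
  have hfm : StronglyMeasurable f := hcont2.stronglyMeasurable.integral_prod_right'
  have hfbound : ∀ t ∈ Set.Ioo 0 L, |f t| ≤ M := by
    intro t ht
    exact abs_setIntegral_I_le ((hslice t).aestronglyMeasurable) (fun y hy => hM t ht y hy)
  have hcmem : ∀ c ∈ ω, ∀ y ∈ I, c + r * y ∈ Set.Ioo 0 L := by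
    intro c hc y hy
    obtain ⟨h1, h2⟩ := hpos c hc
    obtain ⟨hy1, hy2⟩ := hy
    constructor <;> nlinarith
  have hJle : ∀ c ∈ ω, |J c| ≤ M := by
    intro c hc
    exact abs_setIntegral_I_le ((hJcont c).aestronglyMeasurable)
      (fun y hy => hM _ (hcmem c hc y hy) y hy)
  rw [Aside hr hδ hrδ hsep ψ hψ, Bside hL hε f hfm.measurable hfbound]
  have hA : (ε / r) * ∑ c ∈ ω, r * J c = ∑ c ∈ ω, ε * J c := by
    rw [Finset.mul_sum]
    refine Finset.sum_congr rfl fun c _ => ?_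
    field_simp
  rw [hA, ← Finset.sum_filter_add_sum_filter_not ω (fun c => goodCell L ε c) (fun c => ε * J c)]
  have hsplit :
      ((∑ c ∈ ω.filter (fun c => goodCell L ε c), ε * J c)
        + ∑ c ∈ ω.filter (fun c => ¬ goodCell L ε c), ε * J c)
        - (∑ c ∈ ω.filter (fun c => goodCell L ε c),
            ∫ t in Set.Ioo (ε * iCell ε c - ε/2) (ε * iCell ε c + ε/2), f t)
      = (∑ c ∈ ω.filter (fun c => goodCell L ε c),
          (ε * J c - ∫ t in Set.Ioo (ε * iCell ε c - ε/2) (ε * iCell ε c + ε/2), f t))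
        + ∑ c ∈ ω.filter (fun c => ¬ goodCell L ε c), ε * J c := by
    rw [Finset.sum_sub_distrib]
    ring
  rw [hsplit]
  refine le_trans (abs_add_le _ _) (add_le_add ?_ ?_)
  · -- good cells
    refine le_trans (Finset.abs_sum_le_sum_abs _ _) ?_
    have hterm : ∀ c ∈ ω.filter (fun c => goodCell L ε c),
        |ε * J c - ∫ t in Set.Ioo (ε * iCell ε c - ε/2) (ε * iCell ε c + ε/2), f t|
          ≤ ε * η := by
      intro c hc
      obtain ⟨hcω, hg⟩ := Finset.mem_filter.mp hc
      set S : Set ℝ := Set.Ioo (ε * iCell ε c - ε/2) (ε * iCell ε c + ε/2) with hSdef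
      have hSsub : S ⊆ Set.Ioo 0 L := cell_Ioo_subset hg
      have hvol : volume S = ENNReal.ofReal ε := by
        rw [hSdef, Real.volume_Ioo,
          show (ε * iCell ε c + ε/2) - (ε * iCell ε c - ε/2) = ε by ring]
      have hSfin : volume S < ⊤ := by rw [hvol]; exact ENNReal.ofReal_lt_top
      have hconst : ε * J c = ∫ _ in S, J c := by
        rw [setIntegral_const, measureReal_def, hvol, ENNReal.toReal_ofReal hε.le, smul_eq_mul]
      have hfint : IntegrableOn f S volume := by
        refine integrable_of_bdd (hfm.aestronglyMeasurable) (C := M) ?_ ?_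
        · rwa [Measure.restrict_apply_univ]
        · exact (ae_restrict_mem measurableSet_Ioo).mono fun t ht => hfbound t (hSsub ht)
      have hcint : IntegrableOn (fun _ => J c) S volume :=
        integrableOn_const hSfin.ne
      have hsub2 : ε * J c - ∫ t in S, f t = ∫ t in S, (J c - f t) := by
        rw [hconst, ← integral_sub hcint hfint]
      rw [hsub2]
      have hpt : ∀ t ∈ S, ‖J c - f t‖ ≤ η := by
        intro t ht
        rw [Real.norm_eq_abs]
        have hint1 : IntegrableOn (fun y => ψ (c + r * y) y ^ 2) I volume :=
          ((hJcont c).integrableOn_Icc).mono_set Set.Ioo_subset_Icc_self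
        have hint2 : IntegrableOn (fun y => ψ t y ^ 2) I volume :=
          ((hslice t).integrableOn_Icc).mono_set Set.Ioo_subset_Icc_self
        have hdiff : J c - f t = ∫ y in I, (ψ (c + r * y) y ^ 2 - ψ t y ^ 2) :=
          (integral_sub hint1 hint2).symm
        rw [hdiff]
        refine abs_setIntegral_I_le
          (((hJcont c).sub (hslice t)).aestronglyMeasurable) ?_
        intro y hy
        have hcc := self_mem_cell hε c
        have ht1 := ht.1
        have ht2 := ht.2
        have hy1 := hy.1
        have hy2 := hy.2
        have hdist : |c + r * y - t| ≤ 2 * ε := by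
          rw [abs_le]
          constructor <;> nlinarith [hcc.1, hcc.2]
        exact hη (c + r * y) (hcmem c hcω y hy) t (hSsub ht) hdist y hy
      have := norm_setIntegral_le_of_norm_le_const (μ := volume) (s := S) (C := η)
        hSfin hpt
      rw [Real.norm_eq_abs] at this
      calc |∫ t in S, (J c - f t)| ≤ η * (volume S).toReal := this
        _ = ε * η := by rw [hvol, ENNReal.toReal_ofReal hε.le]; ring
    calc ∑ c ∈ ω.filter (fun c => goodCell L ε c),
          |ε * J c - ∫ t in Set.Ioo (ε * iCell ε c - ε/2) (ε * iCell ε c + ε/2), f t|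
        ≤ ∑ _c ∈ ω.filter (fun c => goodCell L ε c), ε * η := Finset.sum_le_sum hterm
      _ = ((ω.filter (fun c => goodCell L ε c)).card : ℝ) * (ε * η) := by
          rw [Finset.sum_const, nsmul_eq_mul]
      _ ≤ (ω.card : ℝ) * (ε * η) := by
          have : ((ω.filter (fun c => goodCell L ε c)).card : ℝ) ≤ (ω.card : ℝ) := by
            exact_mod_cast Finset.card_filter_le _ _
          nlinarith [mul_nonneg hε.le hη0]
      _ = ((ω.card : ℝ) * ε) * η := by ring
      _ ≤ L * η := mul_le_mul_of_nonneg_right (card_mul_le hL hε hsep hpos) hη0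
  · -- bad cells
    refine le_trans (Finset.abs_sum_le_sum_abs _ _) ?_
    have hterm : ∀ c ∈ ω.filter (fun c => ¬ goodCell L ε c), |ε * J c| ≤ ε * M := by
      intro c hc
      obtain ⟨hcω, -⟩ := Finset.mem_filter.mp hc
      rw [abs_mul, abs_of_pos hε]
      exact mul_le_mul_of_nonneg_left (hJle c hcω) hε.le
    calc ∑ c ∈ ω.filter (fun c => ¬ goodCell L ε c), |ε * J c|
        ≤ ∑ _c ∈ ω.filter (fun c => ¬ goodCell L ε c), ε * M := Finset.sum_le_sum hterm
      _ = ((ω.filter (fun c => ¬ goodCell L ε c)).card : ℝ) * (ε * M) := by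
          rw [Finset.sum_const, nsmul_eq_mul]
      _ ≤ 1 * (ε * M) := by
          have h1 : ((ω.filter (fun c => ¬ goodCell L ε c)).card : ℝ) ≤ 1 := by
            exact_mod_cast bad_card hL hε hsep hpos
          nlinarith [mul_nonneg hε.le hM0]
      _ = ε * M := one_mul _

end Geom

end Stmt13Aux

open Stmt13Aux

/-- mean-value property of oscillating test functions relative to the
layer measures: for `φ ∈ C(Ω̄ × Ī)` and `m_ε ⇀* n ℒ³⌊Ω`,
`∫_Ω |φ(x, y_ε(x₃)/r_ε)|² dm_ε → ∫_{Ω×I} |φ(x,y₃)|² n dx dy₃`. -/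
theorem stmt13 (Ω' : Set (Fin 2 → ℝ)) (hΩ'open : IsOpen Ω') (hΩ'bdd : IsBounded Ω')
    (L : ℝ) (ε r : ℕ → ℝ) (δ : ℝ) (ω : ℕ → Finset ℝ)
    (hgood : ∀ k, GoodLayers L (ε k) (r k) δ (ω k))
    (hε0 : Tendsto ε atTop (𝓝 0))
    (n : (Fin 3 → ℝ) → ℝ)
    (hn : NConv Ω' L ε ω n)
    (φ : (Fin 3 → ℝ) → ℝ → ℝ)
    (hφ : Continuous (fun p : (Fin 3 → ℝ) × ℝ => φ p.1 p.2)) :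
    Tendsto
      (fun k => ∫ x, (φ x (yFn (r k) δ (ω k) (x 2) / r k)) ^ 2
        ∂(layerMeasure Ω' (ω k) (ε k) (r k)))
      atTop
      (𝓝 (∫ x in OmegaSet Ω' L,
        (∫ y in Set.Ioo (-(1/2) : ℝ) (1/2), (φ x y) ^ 2) * n x)) := by
  classical
  have hL : 0 < L := (hgood 0).1
  obtain ⟨R₀, hR₀⟩ := hΩ'bdd.subset_closedBall 0
  set R : ℝ := max (max R₀ 0) (|L| + 1) with hRdef
  have hR0 : 0 ≤ R := le_trans (by positivity) (le_max_right _ _)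
  have hball3 : ∀ z : Fin 3 → ℝ, proj2 z ∈ Ω' → z 2 ∈ Set.Ioo 0 L →
      z ∈ Metric.closedBall (0 : Fin 3 → ℝ) R := by
    intro z h1 h2
    rw [Metric.mem_closedBall, dist_zero_right, pi_norm_le_iff_of_nonneg hR0]
    intro i
    refine Fin.lastCases ?_ ?_ i
    · rw [Real.norm_eq_abs]
      have hz2 : z (Fin.last 2) = z 2 := rfl
      rw [hz2]
      have h3 : |z 2| ≤ |L| := by
        rw [abs_le]
        have := le_abs_self L
        have := abs_nonneg L
        constructor <;> [linarith [h2.1]; linarith [h2.2]]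
      calc |z 2| ≤ |L| := h3
        _ ≤ |L| + 1 := by linarith
        _ ≤ R := le_max_right _ _
    · intro j
      rw [Real.norm_eq_abs]
      have hx' : proj2 z ∈ Metric.closedBall (0 : Fin 2 → ℝ) R₀ := hR₀ h1
      have h4 : ‖proj2 z‖ ≤ R₀ := by rwa [Metric.mem_closedBall, dist_zero_right] at hx'
      have h5 : |proj2 z j| ≤ ‖proj2 z‖ := by
        rw [← Real.norm_eq_abs]; exact norm_le_pi_norm _ j
      calc |z j.castSucc| = |proj2 z j| := rfl
        _ ≤ R₀ := le_trans h5 h4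
        _ ≤ max R₀ 0 := le_max_left _ _
        _ ≤ R := le_max_left _ _
  have hKc : IsCompact ((Metric.closedBall (0 : Fin 3 → ℝ) R) ×ˢ Set.Icc (-1 : ℝ) 1) :=
    (isCompact_closedBall _ _).prod isCompact_Icc
  have hΦ : Continuous fun p : (Fin 3 → ℝ) × ℝ => φ p.1 p.2 ^ 2 := hφ.pow 2
  obtain ⟨M, hM⟩ := hKc.exists_bound_of_continuousOn hΦ.continuousOn
  have hM0 : 0 ≤ M := le_trans (norm_nonneg _)
    (hM (0, 0) ⟨Metric.mem_closedBall_self hR0, by constructor <;> norm_num⟩)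
  have hMabs : ∀ (z : Fin 3 → ℝ) (y : ℝ), z ∈ Metric.closedBall (0 : Fin 3 → ℝ) R →
      |y| ≤ 1 → |φ z y ^ 2| ≤ M := by
    intro z y hz hy
    have := hM (z, y) ⟨hz, by rw [Set.mem_Icc]; exact abs_le.mp hy⟩
    rwa [Real.norm_eq_abs] at this
  have hIabs : ∀ y : ℝ, y ∈ Set.Ioo (-(1/2) : ℝ) (1/2) → |y| ≤ 1 := by
    intro y hy
    rw [abs_le]
    exact ⟨by linarith [hy.1], by linarith [hy.2]⟩
  set g : (Fin 3 → ℝ) → ℝ := fun x => ∫ y in Set.Ioo (-(1/2) : ℝ) (1/2), φ x y ^ 2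
    with hgdef
  have hgm : StronglyMeasurable g := hΦ.stronglyMeasurable.integral_prod_right'
  have hslice : ∀ z : Fin 3 → ℝ, Continuous fun y : ℝ => φ z y ^ 2 := by
    intro z
    exact (hφ.comp (by fun_prop : Continuous fun y : ℝ => (z, y))).pow 2
  have hgb : ∀ x : Fin 3 → ℝ, x ∈ Metric.closedBall (0 : Fin 3 → ℝ) R → |g x| ≤ M := by
    intro x hx
    exact abs_setIntegral_I_le ((hslice x).aestronglyMeasurable)
      (fun y hy => hMabs x y hx (hIabs y hy))
  have hproj2m : Measurable proj2 := measurable_pi_lambda _ fun i => measurable_pi_apply _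
  have hOmegaMeas : MeasurableSet (OmegaSet Ω' L) := by
    have : OmegaSet Ω' L = proj2 ⁻¹' Ω' ∩ (fun x : Fin 3 → ℝ => x 2) ⁻¹' (Set.Ioo 0 L) := rfl
    rw [this]
    exact (hproj2m hΩ'open.measurableSet).inter ((measurable_pi_apply 2) measurableSet_Ioo)
  have hOmegaBall : OmegaSet Ω' L ⊆ Metric.closedBall 0 R := fun z hz => hball3 z hz.1 hz.2
  have hOmegaFin : volume (OmegaSet Ω' L) < ⊤ :=
    lt_of_le_of_lt (measure_mono hOmegaBall) measure_closedBall_lt_top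
  have hΩfin : volume Ω' < ⊤ :=
    lt_of_le_of_lt (measure_mono hR₀) measure_closedBall_lt_top
  have hgInt : Integrable g (volume.restrict (OmegaSet Ω' L)) :=
    integrable_of_bdd hgm.aestronglyMeasurable
      (by rwa [Measure.restrict_apply_univ])
      ((ae_restrict_mem hOmegaMeas).mono fun x hx => hgb x (hOmegaBall hx))
  have hB := hn g hgInt
  have htar : ∫ x in OmegaSet Ω' L, n x * g x = ∫ x in OmegaSet Ω' L, g x * n x :=
    integral_congr_ae (ae_of_all _ fun x => mul_comm _ _)
  rw [htar] at hB
  show Tendsto (fun k => ∫ x, (φ x (yFn (r k) δ (ω k) (x 2) / r k)) ^ 2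
    ∂(layerMeasure Ω' (ω k) (ε k) (r k))) atTop (𝓝 (∫ x in OmegaSet Ω' L, g x * n x))
  set A : ℕ → ℝ := fun k => ∫ x, (φ x (yFn (r k) δ (ω k) (x 2) / r k)) ^ 2
    ∂(layerMeasure Ω' (ω k) (ε k) (r k)) with hAdef
  set B : ℕ → ℝ := fun k => ∫ x in OmegaSet Ω' L, countFn L (ε k) (ω k) (x 2) * g x
    with hBdef
  suffices hdiff : Tendsto (fun k => A k - B k) atTop (𝓝 0) by
    have h := hdiff.add hB
    rw [zero_add] at h
    exact h.congr fun k => by ring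
  rw [NormedAddCommGroup.tendsto_nhds_zero]
  intro η' hη'
  set V : ℝ := (volume Ω').toReal with hVdef
  have hV0 : 0 ≤ V := ENNReal.toReal_nonneg
  set η₁ : ℝ := η' / (2 * (V * L + 1)) with hη₁def
  have hη₁ : 0 < η₁ := by positivity
  have hUC := (hKc.uniformContinuousOn_of_continuous hΦ.continuousOn)
  rw [Metric.uniformContinuousOn_iff] at hUC
  obtain ⟨d, hd0, hd⟩ := hUC η₁ hη₁
  set b : ℝ := min (d / 3) (η' / (2 * (V * M + 1))) with hbdef
  have hb0 : 0 < b := lt_min (by positivity) (by positivity)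
  have hev : ∀ᶠ k in atTop, ε k < b := hε0.eventually_lt_const hb0
  filter_upwards [hev] with k hk
  obtain ⟨-, hεk, hrk, hδk, hrδk, hmemk, hsepk, hposk⟩ := hgood k
  set Dk : Set ℝ := {t : ℝ | ∃ c ∈ ω k, |t - c| < r k / 2} with hDkdef
  have hDkm : MeasurableSet Dk := by
    rw [hDkdef, Dk_eq]
    exact Finset.measurableSet_biUnion _ fun _ _ => measurableSet_Ioo
  have hDksub : Dk ⊆ Set.Ioo 0 L := by
    rintro t ⟨c, hc, habs⟩
    obtain ⟨h1, h2⟩ := hposk c hc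
    obtain ⟨h3, h4⟩ := abs_sub_lt_iff.mp habs
    constructor <;> nlinarith
  have hIooLfin : volume (Set.Ioo (0:ℝ) L) < ⊤ := by
    rw [Real.volume_Ioo]; exact ENNReal.ofReal_lt_top
  have hDkfin : volume Dk < ⊤ := lt_of_le_of_lt (measure_mono hDksub) hIooLfin
  -- A side
  set F₁ : (Fin 3 → ℝ) → ℝ := fun x => φ x (yFn (r k) δ (ω k) (x 2) / r k) ^ 2 with hF₁def
  have hF₁m : Measurable F₁ := by
    have h1 : Measurable fun x : Fin 3 → ℝ => yFn (r k) δ (ω k) (x 2) / r k :=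
      ((yFn_measurable _ _ _).comp (measurable_pi_apply 2)).div_const _
    exact (hφ.measurable.comp (measurable_id.prodMk h1)).pow_const 2
  have hF₁b : ∀ x : Fin 3 → ℝ, proj2 x ∈ Ω' → x 2 ∈ Dk → |F₁ x| ≤ M := by
    intro x hx1 hx2
    obtain ⟨c, hc, habs⟩ := hx2
    obtain ⟨h3, h4⟩ := abs_sub_lt_iff.mp habs
    have hx2' : x 2 ∈ Set.Ioo (c - r k/2) (c + r k/2) := ⟨by linarith, by linarith⟩
    have hyeq : yFn (r k) δ (ω k) (x 2) = x 2 - c := yFn_eq hrk hδk hrδk hsepk hc hx2'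
    refine hMabs x _ (hball3 x hx1 (hDksub ⟨c, hc, habs⟩)) ?_
    rw [hyeq, abs_div, abs_of_pos hrk, div_le_one hrk]
    calc |x 2 - c| ≤ r k / 2 := habs.le
      _ ≤ r k := by linarith
  obtain ⟨hAeq, hAint⟩ := fubini_slice hΩ'open.measurableSet hΩfin hDkm hDkfin hF₁m hF₁b
  -- B side
  set F₂ : (Fin 3 → ℝ) → ℝ := fun x => countFn L (ε k) (ω k) (x 2) * g x with hF₂def
  have hF₂m : Measurable F₂ :=
    ((countFn_measurable L hεk (ω k)).comp (measurable_pi_apply 2)).mul hgm.measurable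
  have hF₂b : ∀ x : Fin 3 → ℝ, proj2 x ∈ Ω' → x 2 ∈ Set.Ioo 0 L →
      |F₂ x| ≤ ((ω k).card : ℝ) * M := by
    intro x h1 h2
    have hcnt0 := countFn_nonneg (L := L) hεk (ω := ω k) (x 2)
    have hcnt1 := countFn_le (L := L) hεk (ω := ω k) (x 2)
    have hgx := hgb x (hball3 x h1 h2)
    calc |F₂ x| = |countFn L (ε k) (ω k) (x 2)| * |g x| := abs_mul _ _
      _ ≤ ((ω k).card : ℝ) * M := by
          rw [abs_of_nonneg hcnt0]
          exact mul_le_mul hcnt1 hgx (abs_nonneg _) (Nat.cast_nonneg _)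
  obtain ⟨hBeq, hBint⟩ := fubini_slice hΩ'open.measurableSet hΩfin measurableSet_Ioo
    hIooLfin hF₂m hF₂b
  -- rewrite A k
  have hAk : A k = (ε k / r k) * ∫ x' in Ω', ∫ t in Dk, F₁ (Fin.snoc x' t) := by
    rw [hAdef]
    show (∫ x, (φ x (yFn (r k) δ (ω k) (x 2) / r k)) ^ 2
      ∂(layerMeasure Ω' (ω k) (ε k) (r k))) = _
    rw [layerMeasure, integral_smul_measure,
      ENNReal.toReal_ofReal (by positivity : (0:ℝ) ≤ ε k / r k), smul_eq_mul]
    exact congrArg (fun z => (ε k / r k) * z) hAeq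
  have hBk : B k = ∫ x' in Ω', ∫ t in Set.Ioo 0 L, F₂ (Fin.snoc x' t) := by
    rw [hBdef]
    exact hBeq
  have hABk : A k - B k = ∫ x' in Ω',
      ((ε k / r k) * (∫ t in Dk, F₁ (Fin.snoc x' t))
        - ∫ t in Set.Ioo 0 L, F₂ (Fin.snoc x' t)) := by
    rw [hAk, hBk, ← integral_const_mul]
    exact (integral_sub (hAint.const_mul _) hBint).symm
  rw [hABk]
  -- pointwise bound via oneD_bound
  have hpt : ∀ x' ∈ Ω',
      ‖(ε k / r k) * (∫ t in Dk, F₁ (Fin.snoc x' t))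
        - ∫ t in Set.Ioo 0 L, F₂ (Fin.snoc x' t)‖ ≤ L * η₁ + ε k * M := by
    intro x' hx'
    have hψc : Continuous fun p : ℝ × ℝ => φ (Fin.snoc x' p.1) p.2 :=
      hφ.comp (((snoc_continuous x').comp continuous_fst).prodMk continuous_snd)
    have hsnocball : ∀ s : ℝ, s ∈ Set.Ioo 0 L →
        (Fin.snoc x' s : Fin 3 → ℝ) ∈ Metric.closedBall (0 : Fin 3 → ℝ) R := by
      intro s hs
      exact hball3 _ (by rw [proj2_snoc]; exact hx') (by rw [snoc_two]; exact hs)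
    have hMψ : ∀ s ∈ Set.Ioo 0 L, ∀ y ∈ Set.Ioo (-(1/2) : ℝ) (1/2),
        |φ (Fin.snoc x' s) y ^ 2| ≤ M := by
      intro s hs y hy
      exact hMabs _ y (hsnocball s hs) (hIabs y hy)
    have hηψ : ∀ s ∈ Set.Ioo 0 L, ∀ t ∈ Set.Ioo 0 L, |s - t| ≤ 2 * ε k →
        ∀ y ∈ Set.Ioo (-(1/2) : ℝ) (1/2),
        |φ (Fin.snoc x' s) y ^ 2 - φ (Fin.snoc x' t) y ^ 2| ≤ η₁ := by
      intro s hs t ht hst y hy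
      have hyI : y ∈ Set.Icc (-1 : ℝ) 1 := by
        rw [Set.mem_Icc]; exact abs_le.mp (hIabs y hy)
      have hdist : dist ((Fin.snoc x' s : Fin 3 → ℝ), y) ((Fin.snoc x' t : Fin 3 → ℝ), y) < d := by
        rw [Prod.dist_eq]
        have h1 : dist (Fin.snoc x' s : Fin 3 → ℝ) (Fin.snoc x' t) ≤ |s - t| := by
          rw [dist_pi_le_iff (abs_nonneg _)]
          intro i
          refine Fin.lastCases ?_ ?_ i
          · rw [Fin.snoc_last, Fin.snoc_last, Real.dist_eq]
          · intro j
            rw [Fin.snoc_castSucc, Fin.snoc_castSucc, dist_self]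
            exact abs_nonneg _
        have h2 : dist y y = 0 := dist_self y
        rw [h2]
        have h3 : |s - t| < d := by
          have hb1 : ε k < d / 3 := lt_of_lt_of_le hk (min_le_left _ _)
          calc |s - t| ≤ 2 * ε k := hst
            _ < 2 * (d/3) := by linarith
            _ < d := by linarith
        exact lt_of_le_of_lt (max_le h1 (abs_nonneg _)) h3
      have := hd ((Fin.snoc x' s : Fin 3 → ℝ), y) ⟨hsnocball s hs, hyI⟩
        ((Fin.snoc x' t : Fin 3 → ℝ), y) ⟨hsnocball t ht, hyI⟩ hdist
      rw [Real.dist_eq] at this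
      exact this.le
    have h1d := oneD_bound hL hεk hrk hδk hrδk hsepk hposk
      (fun t y => φ (Fin.snoc x' t) y) hψc η₁ M hη₁.le hM0 hMψ hηψ
    rw [Real.norm_eq_abs]
    have hsame1 : (∫ t in Dk, F₁ (Fin.snoc x' t))
        = ∫ t in {t : ℝ | ∃ c ∈ ω k, |t - c| < r k / 2},
            φ (Fin.snoc x' t) (yFn (r k) δ (ω k) t / r k) ^ 2 := by
      rw [hDkdef]
      refine setIntegral_congr_fun hDkm fun t _ => ?_
      rw [hF₁def]
      simp only [snoc_two]
    have hsame2 : (∫ t in Set.Ioo 0 L, F₂ (Fin.snoc x' t))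
        = ∫ t in Set.Ioo 0 L, countFn L (ε k) (ω k) t
            * (∫ y in Set.Ioo (-(1/2) : ℝ) (1/2), φ (Fin.snoc x' t) y ^ 2) := by
      refine setIntegral_congr_fun measurableSet_Ioo fun t _ => ?_
      rw [hF₂def, hgdef]
      simp only [snoc_two]
    rw [hsame1, hsame2]
    exact h1d
  have hbound := norm_setIntegral_le_of_norm_le_const (μ := volume) (s := Ω')
    (C := L * η₁ + ε k * M) hΩfin hpt
  have hVL : V * L + 1 > 0 := by positivity
  have hVM : V * M + 1 > 0 := by positivity
  have he1 : (V * L + 1) * η₁ = η' / 2 := by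
    have h0 : V * L + 1 ≠ 0 := ne_of_gt hVL
    rw [hη₁def]
    field_simp
  have hkey1 : (L * η₁) * V ≤ η' / 2 := by
    calc (L * η₁) * V = (V * L) * η₁ := by ring
      _ ≤ (V * L + 1) * η₁ := mul_le_mul_of_nonneg_right (by linarith) hη₁.le
      _ = η' / 2 := he1
  have he2 : (V * M + 1) * (η' / (2 * (V * M + 1))) = η' / 2 := by
    have h0 : V * M + 1 ≠ 0 := ne_of_gt hVM
    field_simp
  have hkey2 : (ε k * M) * V < η' / 2 := by
    have hb2 : ε k < η' / (2 * (V * M + 1)) := lt_of_lt_of_le hk (min_le_right _ _)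
    calc (ε k * M) * V = (V * M) * ε k := by ring
      _ ≤ (V * M + 1) * ε k := mul_le_mul_of_nonneg_right (by linarith) hεk.le
      _ < (V * M + 1) * (η' / (2 * (V * M + 1))) := by
          exact mul_lt_mul_of_pos_left hb2 hVM
      _ = η' / 2 := he2
  calc ‖∫ x' in Ω', ((ε k / r k) * (∫ t in Dk, F₁ (Fin.snoc x' t))
        - ∫ t in Set.Ioo 0 L, F₂ (Fin.snoc x' t))‖
      ≤ (L * η₁ + ε k * M) * V := hbound
    _ = (L * η₁) * V + (ε k * M) * V := by ring
    _ < η' / 2 + η' / 2 := by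
        have := hkey1; have := hkey2; linarith
    _ = η' := by ring
end
end
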